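/- arXiv:2504.00004 — 9 statements merged into one kernel-verified Lean document; each statement's English description precedes it below -/
import Mathlib

section
/- Let f, g : ℕ → ℂ be sequences, let l₁ ≤ u₁ and l₂ ≤ u₂ be natural numbers, and suppose the polynomial identity ∑_{k=l₁}^{u₁} f(k)(1−t)^k = ∑_{k=l₂}^{u₂} g(k) t^k holds for all t ∈ ℂ. Then for all natural numbers r, s with 1 ≤ s ≤ r, one has ∑_{k=l₁}^{u₁} f(k) / C(k+r, s) = (s/(r−s+1)) · ∑_{k=l₂}^{u₂} g(k) / C(k+r, r−s+1). -/
open Finset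
open scoped Nat

lemma fact_prod_aux (a b : ℕ) : a ! * ∏ j ∈ range (b + 1), (a + 1 + j) = (a + b + 1)! := by
  induction b with
  | zero => simp [Nat.factorial_succ, mul_comm]
  | succ b ih =>
      rw [prod_range_succ, ← mul_assoc, ih,
        show a + (b + 1) + 1 = (a + b + 1) + 1 from by omega, Nat.factorial_succ, mul_comm]
      congr 1
      omega

lemma J_eval (a b : ℕ) :
    (∫ x in (0:ℝ)..1, (x : ℂ) ^ a * (1 - (x : ℂ)) ^ b) =
      ((a ! : ℂ) * (b ! : ℂ)) / ((a + b + 1)! : ℂ) := by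
  have hre : 0 < Complex.re ((a : ℂ) + 1) := by
    simp only [Complex.add_re, Complex.natCast_re, Complex.one_re]
    positivity
  have h := Complex.betaIntegral_eval_nat_add_one_right hre b
  have hβ : Complex.betaIntegral ((a : ℂ) + 1) ((b : ℂ) + 1) =
      ∫ x in (0:ℝ)..1, (x : ℂ) ^ a * (1 - (x : ℂ)) ^ b := by
    rw [Complex.betaIntegral]
    congr 1
    ext x
    rw [add_sub_cancel_right, add_sub_cancel_right, Complex.cpow_natCast,
      Complex.cpow_natCast]
  have hprod : (∏ j ∈ range (b + 1), ((a : ℂ) + 1 + (j : ℂ))) =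
      (((a + b + 1)! : ℕ) : ℂ) / ((a ! : ℕ) : ℂ) := by
    have ha : ((a ! : ℕ) : ℂ) ≠ 0 := Nat.cast_ne_zero.mpr (Nat.factorial_ne_zero a)
    rw [eq_div_iff ha, mul_comm]
    exact_mod_cast congrArg (Nat.cast : ℕ → ℂ) (fact_prod_aux a b)
  rw [hβ] at h
  rw [h, hprod]
  have ha : ((a ! : ℕ) : ℂ) ≠ 0 := Nat.cast_ne_zero.mpr (Nat.factorial_ne_zero a)
  have hab : (((a + b + 1)! : ℕ) : ℂ) ≠ 0 := Nat.cast_ne_zero.mpr (Nat.factorial_ne_zero _)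
  field_simp

theorem stmt_0 (f g : ℕ → ℂ) (l₁ u₁ l₂ u₂ : ℕ) (h₁ : l₁ ≤ u₁) (h₂ : l₂ ≤ u₂)
    (hpoly : ∀ t : ℂ, ∑ k ∈ Icc l₁ u₁, f k * (1 - t) ^ k = ∑ k ∈ Icc l₂ u₂, g k * t ^ k)
    (r s : ℕ) (hs : 1 ≤ s) (hsr : s ≤ r) :
    ∑ k ∈ Icc l₁ u₁, f k / (Nat.choose (k + r) s : ℂ) =
      ((s : ℂ) / (((r - s : ℕ) : ℂ) + 1)) *
        ∑ k ∈ Icc l₂ u₂, g k / (Nat.choose (k + r) (r - s + 1) : ℂ) := by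
  set I : ℂ := ∫ x in (0:ℝ)..1,
      (x : ℂ) ^ (s - 1) * (1 - (x : ℂ)) ^ (r - s) * ∑ k ∈ Icc l₁ u₁, f k * (1 - (x : ℂ)) ^ k
    with hIdef
  have hcont : ∀ (k a b : ℕ),
      Continuous (fun x : ℝ => (x : ℂ) ^ a * (1 - (x : ℂ)) ^ b * (f k * (1 - (x : ℂ)) ^ k)) := by
    intro k a b
    fun_prop
  have hI1 : I = ∑ k ∈ Icc l₁ u₁, f k * (((s - 1)! : ℂ) * ((k + r - s)! : ℂ) / ((k + r)! : ℂ)) := by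
    rw [hIdef]
    have : (fun x : ℝ => (x : ℂ) ^ (s - 1) * (1 - (x : ℂ)) ^ (r - s) *
        ∑ k ∈ Icc l₁ u₁, f k * (1 - (x : ℂ)) ^ k) =
        fun x : ℝ => ∑ k ∈ Icc l₁ u₁,
          (x : ℂ) ^ (s - 1) * (1 - (x : ℂ)) ^ (r - s) * (f k * (1 - (x : ℂ)) ^ k) := by
      ext x; rw [mul_sum]
    rw [this, intervalIntegral.integral_finset_sum]
    · refine Finset.sum_congr rfl fun k hk => ?_
      have heq : (fun x : ℝ => (x : ℂ) ^ (s - 1) * (1 - (x : ℂ)) ^ (r - s) *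
          (f k * (1 - (x : ℂ)) ^ k)) =
          fun x : ℝ => f k * ((x : ℂ) ^ (s - 1) * (1 - (x : ℂ)) ^ (r - s + k)) := by
        ext x; rw [pow_add]; ring
      rw [heq, intervalIntegral.integral_const_mul, J_eval]
      have : s - 1 + (r - s + k) + 1 = k + r := by omega
      rw [this]
      have : r - s + k = k + r - s := by omega
      rw [this]
    · intro k _
      exact (hcont k _ _).intervalIntegrable _ _
  have hI2 : I = ∑ k ∈ Icc l₂ u₂, g k * (((k + s - 1)! : ℂ) * ((r - s)! : ℂ) / ((k + r)! : ℂ)) := by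
    rw [hIdef]
    have heq1 : (fun x : ℝ => (x : ℂ) ^ (s - 1) * (1 - (x : ℂ)) ^ (r - s) *
        ∑ k ∈ Icc l₁ u₁, f k * (1 - (x : ℂ)) ^ k) =
        fun x : ℝ => ∑ k ∈ Icc l₂ u₂,
          (x : ℂ) ^ (k + s - 1) * (1 - (x : ℂ)) ^ (r - s) * (g k * 1) := by
      ext x
      rw [hpoly, mul_sum]
      refine Finset.sum_congr rfl fun k hk => ?_
      have : k + s - 1 = (s - 1) + k := by omega
      rw [this, pow_add]
      ring
    rw [heq1, intervalIntegral.integral_finset_sum]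
    · refine Finset.sum_congr rfl fun k hk => ?_
      have heq : (fun x : ℝ => (x : ℂ) ^ (k + s - 1) * (1 - (x : ℂ)) ^ (r - s) * (g k * 1)) =
          fun x : ℝ => g k * ((x : ℂ) ^ (k + s - 1) * (1 - (x : ℂ)) ^ (r - s)) := by
        ext x; ring
      rw [heq, intervalIntegral.integral_const_mul, J_eval]
      have : k + s - 1 + (r - s) + 1 = k + r := by omega
      rw [this]
    · intro k _
      have : Continuous (fun x : ℝ =>
          (x : ℂ) ^ (k + s - 1) * (1 - (x : ℂ)) ^ (r - s) * (g k * 1)) := by fun_prop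
      exact this.intervalIntegrable _ _
  have hfac : ∀ n : ℕ, ((n ! : ℕ) : ℂ) ≠ 0 := fun n => Nat.cast_ne_zero.mpr (Nat.factorial_ne_zero n)
  have hL : ∑ k ∈ Icc l₁ u₁, f k / (Nat.choose (k + r) s : ℂ) = (s : ℂ) * I := by
    rw [hI1, mul_sum]
    refine Finset.sum_congr rfl fun k hk => ?_
    rw [Nat.cast_choose ℂ (by omega : s ≤ k + r)]
    have hsfac : (s : ℂ) * ((s - 1)! : ℂ) = (s ! : ℂ) := by
      rw [← Nat.cast_mul]
      exact_mod_cast congrArg (Nat.cast : ℕ → ℂ) (Nat.mul_factorial_pred (by omega : s ≠ 0))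
    have h1 := hfac (k + r)
    have h2 := hfac s
    have h3 := hfac (k + r - s)
    field_simp
    rw [← hsfac]
    ring
  have hR : ((s : ℂ) / (((r - s : ℕ) : ℂ) + 1)) *
      ∑ k ∈ Icc l₂ u₂, g k / (Nat.choose (k + r) (r - s + 1) : ℂ) = (s : ℂ) * I := by
    rw [hI2, mul_sum, mul_sum]
    refine Finset.sum_congr rfl fun k hk => ?_
    rw [Nat.cast_choose ℂ (by omega : r - s + 1 ≤ k + r)]
    have hkk : k + r - (r - s + 1) = k + s - 1 := by omega
    rw [hkk]
    have hrs : (((r - s : ℕ) : ℂ) + 1) = ((r - s + 1 : ℕ) : ℂ) := by push_cast; ring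
    have hsfac : ((r - s + 1 : ℕ) : ℂ) * ((r - s)! : ℂ) = ((r - s + 1)! : ℂ) := by
      exact_mod_cast congrArg (Nat.cast : ℕ → ℂ) (Nat.factorial_succ (r - s)).symm
    have h1 := hfac (k + r)
    have h2 := hfac (r - s + 1)
    have h3 := hfac (k + s - 1)
    have h4 := hfac (r - s)
    have h5 : ((r - s + 1 : ℕ) : ℂ) ≠ 0 := Nat.cast_ne_zero.mpr (by omega)
    rw [hrs, ← hsfac]
    generalize hc : ((r - s + 1 : ℕ) : ℂ) = c at h5 ⊢
    field_simp
  rw [hL, hR]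
end

section
/- Let n be a natural number, let f, g : ℕ → ℂ be sequences, let l₁ ≤ u₁ ≤ n and l₂ ≤ u₂ be natural numbers, and suppose the polynomial identity ∑_{k=l₁}^{u₁} f(k) t^k (1−t)^{n−k} = ∑_{k=l₂}^{u₂} g(k) t^k holds for all t ∈ ℂ. Then for all natural numbers r, s with 1 ≤ s ≤ r, one has ∑_{k=l₁}^{u₁} f(k) / ((k+s) · C(n+r, k+s)) = ∑_{k=l₂}^{u₂} g(k) / ((k+s) · C(k+r, k+s)). -/
open Finset

lemma beta_nat (a b : ℕ) :
    ∫ x in (0:ℝ)..1, (x:ℂ) ^ a * (1 - (x:ℂ)) ^ b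
      = (a.factorial : ℂ) * b.factorial / (a + b + 1).factorial := by
  have h1 : Complex.betaIntegral ((a:ℂ) + 1) ((b:ℂ) + 1)
      = ∫ x in (0:ℝ)..1, (x:ℂ) ^ a * (1 - (x:ℂ)) ^ b := by
    rw [Complex.betaIntegral]
    apply intervalIntegral.integral_congr
    intro x _
    have e1 : ((a:ℂ) + 1 - 1) = ((a:ℕ) : ℂ) := by push_cast; ring
    have e2 : ((b:ℂ) + 1 - 1) = ((b:ℕ) : ℂ) := by push_cast; ring
    simp only [e1, e2, Complex.cpow_natCast]
  have h2 := Complex.betaIntegral_eval_nat_add_one_right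
    (u := (a:ℂ) + 1) (by simp; positivity) b
  have h3 : (∏ j ∈ Finset.range (b + 1), ((a:ℂ) + 1 + j))
      = ((∏ j ∈ Finset.range (b + 1), (a + 1 + j) : ℕ) : ℂ) := by
    push_cast; ring_nf
  have h4 : ∀ c : ℕ, a.factorial * (∏ j ∈ Finset.range (c + 1), (a + 1 + j)) = (a + c + 1).factorial := by
    intro c
    induction c with
    | zero => simp [Nat.factorial_succ]; ring
    | succ m ih =>
      rw [Finset.prod_range_succ, ← mul_assoc, ih]
      have e : a + (m+1) + 1 = (a + m + 1) + 1 := by ring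
      rw [e, Nat.factorial_succ (a+m+1)]
      ring
  have hfa : ((a.factorial : ℕ) : ℂ) ≠ 0 := by exact_mod_cast a.factorial_ne_zero
  have h5 : (((a + b + 1).factorial : ℕ) : ℂ)
      = (a.factorial : ℂ) * ((∏ j ∈ Finset.range (b + 1), (a + 1 + j) : ℕ) : ℂ) := by
    exact_mod_cast (h4 b).symm
  rw [← h1, h2, h3, h5, mul_div_mul_left _ _ hfa]

lemma aux_frac (k s N : ℕ) (hs : 1 ≤ s) (h : k + s ≤ N) :
    ((k + (s - 1)).factorial : ℂ) * ((N - (k + s)).factorial : ℂ) / (N.factorial : ℂ)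
      = 1 / (((k : ℂ) + s) * (N.choose (k + s) : ℂ)) := by
  have hnat : (k + s) * (N.choose (k + s)) * ((k + (s - 1)).factorial * (N - (k + s)).factorial)
      = N.factorial := by
    have h2 := Nat.choose_mul_factorial_mul_factorial h
    have h3 : (k + s).factorial = (k + s) * (k + (s - 1)).factorial := by
      have e : k + s = (k + (s - 1)) + 1 := by omega
      rw [e, Nat.factorial_succ]
    rw [← h2, h3]; ring
  have hks : ((k : ℂ) + s) ≠ 0 := by
    have : ((k : ℂ) + s) = ((k + s : ℕ) : ℂ) := by push_cast; ring
    rw [this]; exact_mod_cast (by omega : k + s ≠ 0)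
  have hch : ((N.choose (k + s) : ℕ) : ℂ) ≠ 0 := by
    exact_mod_cast (Nat.choose_pos h).ne'
  have hNf : ((N.factorial : ℕ) : ℂ) ≠ 0 := by exact_mod_cast N.factorial_ne_zero
  rw [div_eq_div_iff hNf (by exact mul_ne_zero hks hch)]
  have : ((N.factorial : ℕ) : ℂ)
      = (((k + s) * (N.choose (k + s)) * ((k + (s - 1)).factorial * (N - (k + s)).factorial) : ℕ) : ℂ) := by
    exact_mod_cast hnat.symm
  rw [this]; push_cast; ring

theorem stmt_1 (n : ℕ) (f g : ℕ → ℂ) (l₁ u₁ l₂ u₂ : ℕ) (h₁ : l₁ ≤ u₁) (h₁n : u₁ ≤ n)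
    (h₂ : l₂ ≤ u₂)
    (hpoly : ∀ t : ℂ, ∑ k ∈ Icc l₁ u₁, f k * t ^ k * (1 - t) ^ (n - k) =
      ∑ k ∈ Icc l₂ u₂, g k * t ^ k)
    (r s : ℕ) (hs : 1 ≤ s) (hsr : s ≤ r) :
    ∑ k ∈ Icc l₁ u₁, f k / (((k : ℂ) + s) * (Nat.choose (n + r) (k + s) : ℂ)) =
      ∑ k ∈ Icc l₂ u₂, g k / (((k : ℂ) + s) * (Nat.choose (k + r) (k + s) : ℂ)) := by
  -- integrate both sides of hpoly against x^(s-1) (1-x)^(r-s)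
  have hInt : (∫ x in (0:ℝ)..1, ∑ k ∈ Icc l₁ u₁,
        f k * ((x:ℂ) ^ (k + (s - 1)) * (1 - (x:ℂ)) ^ ((n - k) + (r - s))))
      = ∫ x in (0:ℝ)..1, ∑ k ∈ Icc l₂ u₂,
        g k * ((x:ℂ) ^ (k + (s - 1)) * (1 - (x:ℂ)) ^ (r - s)) := by
    apply intervalIntegral.integral_congr
    intro x _
    have h := hpoly (x : ℂ)
    calc ∑ k ∈ Icc l₁ u₁, f k * ((x:ℂ) ^ (k + (s - 1)) * (1 - (x:ℂ)) ^ ((n - k) + (r - s)))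
        = ((x:ℂ) ^ (s - 1) * (1 - (x:ℂ)) ^ (r - s)) *
          ∑ k ∈ Icc l₁ u₁, f k * (x:ℂ) ^ k * (1 - (x:ℂ)) ^ (n - k) := by
          rw [Finset.mul_sum]
          refine Finset.sum_congr rfl fun k _ => ?_
          rw [pow_add, pow_add]; ring
      _ = ((x:ℂ) ^ (s - 1) * (1 - (x:ℂ)) ^ (r - s)) * ∑ k ∈ Icc l₂ u₂, g k * (x:ℂ) ^ k := by
          rw [h]
      _ = ∑ k ∈ Icc l₂ u₂, g k * ((x:ℂ) ^ (k + (s - 1)) * (1 - (x:ℂ)) ^ (r - s)) := by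
          rw [Finset.mul_sum]
          refine Finset.sum_congr rfl fun k _ => ?_
          rw [pow_add]; ring
  have hcont : ∀ (c : ℂ) (A B : ℕ), IntervalIntegrable
      (fun x : ℝ => c * ((x:ℂ) ^ A * (1 - (x:ℂ)) ^ B)) MeasureTheory.volume 0 1 := by
    intro c A B
    apply Continuous.intervalIntegrable
    continuity
  rw [intervalIntegral.integral_finset_sum (fun k _ => hcont (f k) _ _),
    intervalIntegral.integral_finset_sum (fun k _ => hcont (g k) _ _)] at hInt
  simp only [intervalIntegral.integral_const_mul, beta_nat] at hInt
  convert hInt using 2 with k hk k hk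
  · -- LHS term
    rw [Finset.mem_Icc] at hk
    have e1 : (n - k) + (r - s) = (n + r) - (k + s) := by omega
    have e2 : k + (s - 1) + ((n + r) - (k + s)) + 1 = n + r := by omega
    rw [e1, e2, aux_frac k s (n + r) hs (by omega), mul_one_div]
  · rw [Finset.mem_Icc] at hk
    have e1 : (r - s) = (k + r) - (k + s) := by omega
    have e2 : k + (s - 1) + ((k + r) - (k + s)) + 1 = k + r := by omega
    rw [e1, e2, aux_frac k s (k + r) hs (by omega), mul_one_div]
end

section
/- For every natural number n and every complex number t, ∑_{k=0}^{n} C(n,k) · H_k^2 · t^k = H_n^2 · (1+t)^n − ∑_{k=1}^{n} ((H_n − 2H_{k−1} + H_{n−k})/k) · (1+t)^{n−k}. -/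
set_option maxHeartbeats 1000000

open Finset

noncomputable def H : ℕ → ℝ := fun m => ∑ j ∈ range m, (1 : ℝ) / (j + 1)

noncomputable def hc : ℕ → ℂ := fun m => ∑ j ∈ range m, (1 : ℂ) / (j + 1)

lemma hH (m : ℕ) : ((H m : ℝ) : ℂ) = hc m := by
  simp only [H, hc]
  push_cast
  rfl

lemma h_zero : hc 0 = 0 := by simp [hc]

lemma h_succ (m : ℕ) : hc (m + 1) = hc m + 1 / (m + 1) := by
  simp [hc, Finset.sum_range_succ]

lemma sum_inv (m : ℕ) : ∑ k ∈ range (m + 1), (1 : ℂ) / k = hc m := by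
  rw [Finset.sum_range_succ' (fun k => (1:ℂ)/k) m]
  simp [hc]

lemma binom (t : ℂ) (n : ℕ) : ∑ k ∈ range (n + 1), (Nat.choose n k : ℂ) * t ^ k = (1 + t) ^ n := by
  have := add_pow t 1 n
  simp only [one_pow, mul_one] at this
  rw [add_comm 1 t, this]
  exact Finset.sum_congr rfl fun k _ => by ring

lemma pascal_split (f : ℕ → ℂ) (n : ℕ) :
    ∑ k ∈ range (n + 1 + 1), (Nat.choose (n+1) k : ℂ) * f k =
      ∑ k ∈ range (n + 1), (Nat.choose n k : ℂ) * f k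
        + ∑ k ∈ range (n + 1), (Nat.choose n k : ℂ) * f (k + 1) := by
  have h2 : ∑ i ∈ range (n + 1), (Nat.choose n (i+1) : ℂ) * f (i+1)
      = ∑ k ∈ range (n + 1), (Nat.choose n k : ℂ) * f k - (Nat.choose n 0 : ℂ) * f 0 := by
    have e1 := Finset.sum_range_succ' (fun k => (Nat.choose n k : ℂ) * f k) (n+1)
    have e2 := Finset.sum_range_succ (fun k => (Nat.choose n k : ℂ) * f k) (n+1)
    simp only [Nat.choose_succ_self, Nat.cast_zero, zero_mul, add_zero] at e2
    rw [e2] at e1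
    linear_combination -e1
  rw [Finset.sum_range_succ' (fun k => (Nat.choose (n+1) k : ℂ) * f k) (n+1)]
  have hcc : ∀ i, (Nat.choose (n+1) (i+1) : ℂ) = (Nat.choose n i : ℂ) + (Nat.choose n (i+1) : ℂ) := by
    intro i
    exact_mod_cast congrArg Nat.cast (Nat.choose_succ_succ n i)
  simp only [hcc, add_mul]
  rw [Finset.sum_add_distrib, h2]
  simp
  ring

lemma shifted (g : ℕ → ℂ) (hg : g 0 = 0) (n : ℕ) :
    ∑ k ∈ range (n + 1), (Nat.choose (n+1) (k+1) : ℂ) * g (k + 1)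
      = ∑ j ∈ range (n + 1 + 1), (Nat.choose (n+1) j : ℂ) * g j := by
  rw [Finset.sum_range_succ' (fun j => (Nat.choose (n+1) j : ℂ) * g j) (n+1)]
  simp [hg]

lemma choose_ratio (n k : ℕ) :
    ((n:ℂ)+1) * (Nat.choose n k : ℂ) = (Nat.choose (n+1) (k+1) : ℂ) * ((k:ℂ)+1) := by
  exact_mod_cast congrArg Nat.cast (Nat.add_one_mul_choose_eq n k)

lemma L2top (t : ℂ) (n : ℕ) :
    ∑ k ∈ range (n + 1), (Nat.choose (n+1) (k+1) : ℂ) * t ^ (k+1) = (1+t)^(n+1) - 1 := by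
  have e := Finset.sum_range_succ' (fun j => (Nat.choose (n+1) j : ℂ) * t ^ j) (n+1)
  rw [binom t (n+1)] at e
  simp only [Nat.choose_zero_right, Nat.cast_one, pow_zero, one_mul] at e
  linear_combination -e

lemma L2 (t : ℂ) (n : ℕ) :
    ∑ k ∈ range (n + 1), (Nat.choose n k : ℂ) * (t ^ (k+1) / ((k:ℂ)+1))
      = ((1+t)^(n+1) - 1) / ((n:ℂ)+1) := by
  have hn1 : ((n:ℂ)+1) ≠ 0 := Nat.cast_add_one_ne_zero n
  have key : ∀ k, (Nat.choose n k : ℂ) * (t ^ (k+1) / ((k:ℂ)+1))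
      = (Nat.choose (n+1) (k+1) : ℂ) * t ^ (k+1) / ((n:ℂ)+1) := by
    intro k
    have hk1 : ((k:ℂ)+1) ≠ 0 := Nat.cast_add_one_ne_zero k
    field_simp
    linear_combination t^(k+1) * choose_ratio n k
  rw [Finset.sum_congr rfl fun k _ => key k, ← Finset.sum_div, L2top]

lemma G (t : ℂ) (n : ℕ) :
    ∑ k ∈ range (n + 1), (Nat.choose n k : ℂ) * (t ^ k / (k:ℂ))
      = ∑ k ∈ range (n + 1), ((1+t)^k - 1) / (k:ℂ) := by
  induction n with
  | zero => simp
  | succ n ih =>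
    rw [pascal_split (fun k => t ^ k / (k:ℂ)) n]
    push_cast
    rw [ih, L2]
    conv_rhs => rw [Finset.sum_range_succ]
    push_cast
    ring

lemma A (t : ℂ) (n : ℕ) :
    ∑ k ∈ range (n + 1), (Nat.choose n k : ℂ) * (hc k * t ^ k)
      = hc n * (1+t)^n - ∑ k ∈ range (n + 1), (1+t)^(n-k) / (k:ℂ) := by
  induction n with
  | zero => simp [h_zero]
  | succ n ih =>
    rw [pascal_split (fun k => hc k * t ^ k) n]
    have key : ∀ k : ℕ, (Nat.choose n k : ℂ) * (hc (k+1) * t ^ (k+1))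
        = (Nat.choose n k : ℂ) * (hc k * t ^ k) * t
          + (Nat.choose n k : ℂ) * (t ^ (k+1) / ((k:ℂ)+1)) := by
      intro k
      rw [h_succ]
      ring
    rw [Finset.sum_congr rfl fun k _ => key k, Finset.sum_add_distrib, ← Finset.sum_mul, L2, ih]
    have hS : ∑ k ∈ range (n + 1 + 1), (1+t)^(n+1-k) / (k:ℂ)
        = (1+t) * (∑ k ∈ range (n + 1), (1+t)^(n-k) / (k:ℂ)) + 1 / ((n:ℂ)+1) := by
      rw [Finset.sum_range_succ, Finset.mul_sum]
      have : ∀ k ∈ range (n+1), (1+t)^(n+1-k) / (k:ℂ) = (1+t) * ((1+t)^(n-k) / (k:ℂ)) := by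
        intro k hk
        have : n + 1 - k = (n - k) + 1 := by
          have := Finset.mem_range.mp hk; omega
        rw [this, pow_succ]
        ring
      rw [Finset.sum_congr rfl this, Nat.sub_self]
      push_cast
      ring
    rw [hS, h_succ]
    ring

lemma peel (f : ℕ → ℂ) (n : ℕ) :
    ∑ k ∈ range (n + 1 + 1), f k = ∑ i ∈ range n, f (i + 1) + f (n + 1) + f 0 := by
  rw [Finset.sum_range_succ' f (n+1), Finset.sum_range_succ]

lemma coeff_id (N K M a X T : ℂ) (hN : N ≠ 0) (hK : K ≠ 0) (hM : M ≠ 0) (hrel : K + M = N) :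
    ((a + 1/N + 1/M)/K) * (X*T)
      = T*((a/K)*X) + (2/N)*(X*T/K) + (1/N)*(X*T/M) := by
  have hM' : M = N - K := by linear_combination hrel
  subst hM'
  field_simp
  ring

lemma Rrec (t : ℂ) (n : ℕ) :
    hc (n+1)^2 * (1+t)^(n+1)
      - ∑ k ∈ range (n+1+1), ((hc (n+1) - 2*hc (k-1) + hc (n+1-k))/(k:ℂ)) * (1+t)^(n+1-k)
    = (1+t) * (hc n^2 * (1+t)^n
        - ∑ k ∈ range (n+1), ((hc n - 2*hc (k-1) + hc (n-k))/(k:ℂ)) * (1+t)^(n-k))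
      + (2/((n:ℂ)+1)) * (hc (n+1) * (1+t)^(n+1) - ∑ k ∈ range (n+1+1), (1+t)^(n+1-k)/(k:ℂ))
      - (1/((n:ℂ)+1)) * ∑ k ∈ range (n+1+1), ((1+t)^k - 1)/(k:ℂ) := by
  have hn1 : ((n:ℂ)+1) ≠ 0 := Nat.cast_add_one_ne_zero n
  have eG : ∑ k ∈ range (n+1+1), ((1+t)^k - 1)/(k:ℂ)
      = ∑ k ∈ range (n+1+1), (1+t)^(n+1-k)/((n+1-k : ℕ):ℂ) - hc (n+1) := by
    have e1 : ∑ k ∈ range (n+1+1), ((1+t)^k - 1)/(k:ℂ)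
        = ∑ k ∈ range (n+1+1), (1+t)^k/(k:ℂ) - ∑ k ∈ range (n+1+1), (1:ℂ)/(k:ℂ) := by
      rw [← Finset.sum_sub_distrib]
      exact Finset.sum_congr rfl fun k _ => by rw [sub_div]
    have e2 : ∑ k ∈ range (n+1+1), (1+t)^(n+1-k)/((n+1-k : ℕ):ℂ)
        = ∑ k ∈ range (n+1+1), (1+t)^k/(k:ℂ) :=
      Finset.sum_range_reflect (fun k => (1+t)^k/((k:ℕ):ℂ)) (n+2)
    rw [e1, e2, sum_inv (n+1)]
  rw [eG]
  rw [peel (fun k => ((hc (n+1) - 2*hc (k-1) + hc (n+1-k))/(k:ℂ)) * (1+t)^(n+1-k)) n]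
  rw [peel (fun k => (1+t)^(n+1-k)/(k:ℂ)) n]
  rw [peel (fun k => (1+t)^(n+1-k)/((n+1-k : ℕ):ℂ)) n]
  rw [Finset.sum_range_succ' (fun k => ((hc n - 2*hc (k-1) + hc (n-k))/(k:ℂ)) * (1+t)^(n-k)) n]
  have key : ∀ i ∈ range n,
      ((hc (n+1) - 2*hc (i+1-1) + hc (n+1-(i+1)))/((i+1 : ℕ):ℂ)) * (1+t)^(n+1-(i+1))
      = (1+t) * (((hc n - 2*hc (i+1-1) + hc (n-(i+1)))/((i+1 : ℕ):ℂ)) * (1+t)^(n-(i+1)))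
        + (2/((n:ℂ)+1)) * ((1+t)^(n+1-(i+1))/((i+1 : ℕ):ℂ))
        + (1/((n:ℂ)+1)) * ((1+t)^(n+1-(i+1))/((n+1-(i+1) : ℕ):ℂ)) := by
    intro i hi
    have hin : i < n := Finset.mem_range.mp hi
    have d1 : i + 1 - 1 = i := rfl
    have d2 : n + 1 - (i+1) = (n - (i+1)) + 1 := by omega
    have hk0 : ((i:ℂ)+1) ≠ 0 := Nat.cast_add_one_ne_zero i
    have hm0 : ((n - (i+1) : ℕ):ℂ) + 1 ≠ 0 := Nat.cast_add_one_ne_zero _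
    have hmrel : ((n - (i+1) : ℕ):ℂ) + 1 = (n:ℂ) + 1 - ((i:ℂ)+1) := by
      have : (n - (i+1) : ℕ) + (i+1) = n := by omega
      have := congrArg (Nat.cast : ℕ → ℂ) this
      push_cast at this
      linear_combination this
    rw [d1, d2, h_succ (n - (i+1)), h_succ n, pow_succ]
    push_cast
    have hrel : ((i:ℂ)+1) + (((n - (i+1) : ℕ):ℂ) + 1) = (n:ℂ) + 1 := by
      linear_combination hmrel
    linear_combination coeff_id ((n:ℂ)+1) ((i:ℂ)+1) (((n - (i+1) : ℕ):ℂ) + 1)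
      (hc n - 2*hc i + hc (n-(i+1))) ((1+t)^(n-(i+1))) (1+t) hn1 hk0 hm0 hrel
  rw [Finset.sum_congr rfl key]
  rw [Finset.sum_add_distrib, Finset.sum_add_distrib, ← Finset.mul_sum, ← Finset.mul_sum,
    ← Finset.mul_sum]
  simp only [Nat.sub_self, Nat.add_sub_cancel, Nat.zero_sub, Nat.sub_zero, Nat.cast_zero,
    Nat.cast_add, Nat.cast_one, pow_zero, h_zero, div_zero, zero_mul, mul_one, add_zero,
    zero_div, mul_zero, CharP.cast_eq_zero]
  rw [h_succ n, pow_succ]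
  field_simp
  ring

lemma Bval (t : ℂ) (n : ℕ) :
    ∑ k ∈ range (n + 1), (Nat.choose n k : ℂ) * (hc k * (t^(k+1)/((k:ℂ)+1)))
      = (hc (n+1) * (1+t)^(n+1) - ∑ k ∈ range (n+1+1), (1+t)^(n+1-k)/(k:ℂ)) / ((n:ℂ)+1)
        - (∑ k ∈ range (n+1+1), ((1+t)^k - 1)/(k:ℂ)) / ((n:ℂ)+1) := by
  have hn1 : ((n:ℂ)+1) ≠ 0 := Nat.cast_add_one_ne_zero n
  have key : ∀ k : ℕ, (Nat.choose n k : ℂ) * (hc k * (t^(k+1)/((k:ℂ)+1)))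
      = ((Nat.choose (n+1) (k+1) : ℂ) * (hc (k+1) * t^(k+1))) / ((n:ℂ)+1)
        - ((Nat.choose (n+1) (k+1) : ℂ) * (t^(k+1)/((k:ℂ)+1))) / ((n:ℂ)+1) := by
    intro k
    have hk1 : ((k:ℂ)+1) ≠ 0 := Nat.cast_add_one_ne_zero k
    rw [h_succ k]
    field_simp
    linear_combination hc k * t^(k+1) * choose_ratio n k
  rw [Finset.sum_congr rfl fun k _ => key k, Finset.sum_sub_distrib,
    ← Finset.sum_div, ← Finset.sum_div]
  have e1 : ∑ k ∈ range (n+1), (Nat.choose (n+1) (k+1) : ℂ) * (hc (k+1) * t^(k+1))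
      = hc (n+1) * (1+t)^(n+1) - ∑ k ∈ range (n+1+1), (1+t)^(n+1-k)/(k:ℂ) := by
    rw [shifted (fun j => hc j * t^j) (by simp [h_zero]) n, A t (n+1)]
  have e2 : ∑ k ∈ range (n+1), (Nat.choose (n+1) (k+1) : ℂ) * (t^(k+1)/((k:ℂ)+1))
      = ∑ k ∈ range (n+1+1), ((1+t)^k - 1)/(k:ℂ) := by
    have := shifted (fun j => t^j/(j:ℂ)) (by simp) n
    rw [← G t (n+1), ← this]
    exact Finset.sum_congr rfl fun k _ => by push_cast; ring
  rw [e1, e2]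

lemma Dval (t : ℂ) (n : ℕ) :
    ∑ k ∈ range (n + 1), (Nat.choose n k : ℂ) * (t^(k+1)/(((k:ℂ)+1)^2))
      = (∑ k ∈ range (n+1+1), ((1+t)^k - 1)/(k:ℂ)) / ((n:ℂ)+1) := by
  have hn1 : ((n:ℂ)+1) ≠ 0 := Nat.cast_add_one_ne_zero n
  have key : ∀ k : ℕ, (Nat.choose n k : ℂ) * (t^(k+1)/(((k:ℂ)+1)^2))
      = ((Nat.choose (n+1) (k+1) : ℂ) * (t^(k+1)/((k:ℂ)+1))) / ((n:ℂ)+1) := by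
    intro k
    have hk1 : ((k:ℂ)+1) ≠ 0 := Nat.cast_add_one_ne_zero k
    field_simp
    linear_combination t^(k+1) * choose_ratio n k
  rw [Finset.sum_congr rfl fun k _ => key k, ← Finset.sum_div]
  have e2 : ∑ k ∈ range (n+1), (Nat.choose (n+1) (k+1) : ℂ) * (t^(k+1)/((k:ℂ)+1))
      = ∑ k ∈ range (n+1+1), ((1+t)^k - 1)/(k:ℂ) := by
    have := shifted (fun j => t^j/(j:ℂ)) (by simp) n
    rw [← G t (n+1), ← this]
    exact Finset.sum_congr rfl fun k _ => by push_cast; ring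
  rw [e2]

lemma Sid (t : ℂ) (n : ℕ) :
    ∑ k ∈ range (n + 1), (Nat.choose n k : ℂ) * (hc k ^ 2 * t ^ k)
      = hc n ^ 2 * (1+t)^n
        - ∑ k ∈ range (n + 1), ((hc n - 2*hc (k-1) + hc (n-k))/(k:ℂ)) * (1+t)^(n-k) := by
  induction n with
  | zero => simp [h_zero]
  | succ n ih =>
    rw [pascal_split (fun k => hc k ^ 2 * t ^ k) n]
    have key : ∀ k : ℕ, (Nat.choose n k : ℂ) * (hc (k+1) ^ 2 * t ^ (k+1))
        = (Nat.choose n k : ℂ) * (hc k ^ 2 * t ^ k) * t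
          + 2 * ((Nat.choose n k : ℂ) * (hc k * (t^(k+1)/((k:ℂ)+1))))
          + (Nat.choose n k : ℂ) * (t^(k+1)/(((k:ℂ)+1)^2)) := by
      intro k
      have hk1 : ((k:ℂ)+1) ≠ 0 := Nat.cast_add_one_ne_zero k
      rw [h_succ k]
      field_simp
      ring
    rw [Finset.sum_congr rfl fun k _ => key k, Finset.sum_add_distrib,
      Finset.sum_add_distrib, ← Finset.sum_mul, ← Finset.mul_sum, Bval, Dval, ih]
    linear_combination -Rrec t n

lemma icc_range (f : ℕ → ℂ) (hf : f 0 = 0) (n : ℕ) :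
    ∑ k ∈ range (n + 1), f k = ∑ k ∈ Icc 1 n, f k := by
  induction n with
  | zero => simp [hf]
  | succ n ih =>
    rw [Finset.sum_range_succ, ih, Finset.sum_Icc_succ_top (by omega : 1 ≤ n + 1)]

theorem stmt_2 (n : ℕ) (t : ℂ) :
    ∑ k ∈ range (n + 1), (Nat.choose n k : ℂ) * ((H k : ℂ)) ^ 2 * t ^ k =
      ((H n : ℂ)) ^ 2 * (1 + t) ^ n -
        ∑ k ∈ Icc 1 n,
          (((H n : ℂ) - 2 * (H (k - 1) : ℂ) + (H (n - k) : ℂ)) / (k : ℂ)) * (1 + t) ^ (n - k) := by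
  have e1 : ∑ k ∈ range (n + 1), (Nat.choose n k : ℂ) * ((H k : ℂ)) ^ 2 * t ^ k
      = ∑ k ∈ range (n + 1), (Nat.choose n k : ℂ) * (hc k ^ 2 * t ^ k) :=
    Finset.sum_congr rfl fun k _ => by rw [hH]; ring
  have e2 : ∑ k ∈ Icc 1 n,
        (((H n : ℂ) - 2 * (H (k - 1) : ℂ) + (H (n - k) : ℂ)) / (k : ℂ)) * (1 + t) ^ (n - k)
      = ∑ k ∈ range (n + 1), ((hc n - 2*hc (k-1) + hc (n-k))/(k:ℂ)) * (1+t)^(n-k) := by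
    rw [icc_range (fun k => ((hc n - 2*hc (k-1) + hc (n-k))/(k:ℂ)) * (1+t)^(n-k)) (by simp) n]
    exact Finset.sum_congr rfl fun k _ => by rw [hH, hH, hH]
  rw [e1, e2, Sid, hH]
end

section
/- For every natural number n and every complex number t, ∑_{k=0}^{n} C(n,k) · H_k^{(2)} · t^k = H_n^{(2)} · (1+t)^n − ∑_{k=1}^{n} ((H_n − H_{n−k})/k) · (1+t)^{n−k}. -/
open Finset

noncomputable def H2 : ℕ → ℝ := fun m => ∑ j ∈ range m, (1 : ℝ) / ((j : ℝ) + 1) ^ 2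

noncomputable def Hc : ℕ → ℂ := fun m => ∑ j ∈ range m, (1 : ℂ) / ((j : ℂ) + 1)

noncomputable def H2c : ℕ → ℂ := fun m => ∑ j ∈ range m, (1 : ℂ) / ((j : ℂ) + 1) ^ 2

lemma H_cast (m : ℕ) : ((H m : ℝ) : ℂ) = Hc m := by
  simp [H, Hc]

lemma H2_cast (m : ℕ) : ((H2 m : ℝ) : ℂ) = H2c m := by
  simp [H2, H2c]

lemma Hc_succ (m : ℕ) : Hc (m+1) = Hc m + 1 / ((m : ℂ) + 1) := by
  simp [Hc, Finset.sum_range_succ]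

lemma H2c_succ (m : ℕ) : H2c (m+1) = H2c m + 1 / ((m : ℂ) + 1) ^ 2 := by
  simp [H2c, Finset.sum_range_succ]

/-- Sum over `Icc 1 N` as a shifted range sum. -/
lemma Icc_to_range (N : ℕ) (f : ℕ → ℂ) :
    ∑ k ∈ Icc 1 N, f k = ∑ i ∈ range N, f (i + 1) := by
  rw [← Finset.Ico_add_one_right_eq_Icc, Finset.sum_Ico_eq_sum_range]
  simp [add_comm]

lemma range_succ_to_Icc (N : ℕ) (f : ℕ → ℂ) :
    ∑ k ∈ range (N+1), f k = f 0 + ∑ k ∈ Icc 1 N, f k := by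
  rw [Icc_to_range, Finset.sum_range_succ']
  ring

lemma Icc_succ_top (N : ℕ) (f : ℕ → ℂ) :
    ∑ k ∈ Icc 1 (N+1), f k = (∑ k ∈ Icc 1 N, f k) + f (N+1) := by
  rw [← Finset.Ico_add_one_right_eq_Icc, Finset.sum_Ico_succ_top (by omega), Finset.Ico_add_one_right_eq_Icc]

/-- Reflection over `Icc 1 n`. -/
lemma Icc_reflect (n : ℕ) (f : ℕ → ℂ) :
    ∑ k ∈ Icc 1 n, f (n + 1 - k) = ∑ k ∈ Icc 1 n, f k := by
  rw [Icc_to_range, Icc_to_range]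
  rw [← Finset.sum_range_reflect (fun i => f (i+1)) n]
  apply Finset.sum_congr rfl
  intro i hi
  rw [Finset.mem_range] at hi
  congr 1
  omega

lemma Hc_eq_Icc (m : ℕ) : Hc m = ∑ k ∈ Icc 1 m, 1 / (k : ℂ) := by
  rw [Icc_to_range]
  simp [Hc]

/-- `(N+1) * C(N,k) = C(N+1,k+1) * (k+1)` over ℂ. -/
lemma choose_mul (N k : ℕ) :
    (N.choose k : ℂ) = ((N+1).choose (k+1) : ℂ) * ((k:ℂ)+1) / ((N:ℂ)+1) := by
  have h0 := Nat.add_one_mul_choose_eq N k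
  have h : ((N:ℂ)+1) * (N.choose k : ℂ) = ((N+1).choose (k+1) : ℂ) * ((k:ℂ)+1) := by
    exact_mod_cast h0
  have hN : ((N:ℂ)+1) ≠ 0 := Nat.cast_add_one_ne_zero N
  field_simp
  linear_combination h

/-- Binomial theorem, sum from 1. -/
lemma binom_sum (N : ℕ) (t : ℂ) :
    ∑ m ∈ Icc 1 N, (N.choose m : ℂ) * t ^ m = (1 + t) ^ N - 1 := by
  have h := add_pow t 1 N
  simp only [one_pow, mul_one] at h
  rw [range_succ_to_Icc] at h
  simp only [Nat.choose_zero_right, Nat.cast_one, pow_zero] at h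
  rw [add_comm t 1] at h
  have h2 : ∀ k ∈ Icc 1 N, (N.choose k : ℂ) * t ^ k = t ^ k * (N.choose k : ℂ) := by
    intro k _; ring
  rw [Finset.sum_congr rfl h2, h]
  ring

/-- Key auxiliary identity. -/
lemma aux1 (N : ℕ) (t : ℂ) :
    ∑ m ∈ Icc 1 N, (N.choose m : ℂ) * t ^ m / m = ∑ k ∈ Icc 1 N, ((1 + t) ^ k - 1) / k := by
  induction N with
  | zero => simp
  | succ N ih =>
    have key : ∑ m ∈ Icc 1 (N+1), ((N+1).choose m : ℂ) * t ^ m / m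
        = (∑ m ∈ Icc 1 (N+1), (N.choose m : ℂ) * t ^ m / m)
          + (∑ m ∈ Icc 1 (N+1), ((N+1).choose m : ℂ) * t ^ m) / ((N:ℂ)+1) := by
      rw [Finset.sum_div, ← Finset.sum_add_distrib]
      apply Finset.sum_congr rfl
      intro m hm
      rw [Finset.mem_Icc] at hm
      obtain ⟨hm1, hm2⟩ := hm
      obtain ⟨j, rfl⟩ : ∃ j, m = j + 1 := ⟨m - 1, by omega⟩
      have hp : ((N+1).choose (j+1) : ℂ) = (N.choose j : ℂ) + (N.choose (j+1) : ℂ) := by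
        rw [Nat.choose_succ_succ]
        push_cast; ring
      have hmul : ((N:ℂ)+1) * (N.choose j : ℂ) = ((N+1).choose (j+1) : ℂ) * ((j:ℂ)+1) := by
        exact_mod_cast Nat.add_one_mul_choose_eq N j
      have hmain : ((N+1).choose (j+1) : ℂ) * ((N:ℂ) - (j:ℂ))
          = ((N:ℂ)+1) * (N.choose (j+1) : ℂ) := by
        linear_combination ((N:ℂ)+1) * hp + hmul
      have hj : ((j:ℂ)+1) ≠ 0 := Nat.cast_add_one_ne_zero j
      have hN : ((N:ℂ)+1) ≠ 0 := Nat.cast_add_one_ne_zero N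
      push_cast
      field_simp
      linear_combination (t^(j+1)) * hmain
    rw [key, binom_sum]
    have h2 : ∑ m ∈ Icc 1 (N+1), (N.choose m : ℂ) * t ^ m / m
        = ∑ m ∈ Icc 1 N, (N.choose m : ℂ) * t ^ m / m := by
      rw [Icc_succ_top]
      simp [Nat.choose_succ_self]
    rw [h2, ih, Icc_succ_top]
    push_cast
    ring

lemma step_lhs (n : ℕ) (t : ℂ) :
    ∑ k ∈ range (n+1+1), ((n+1).choose k : ℂ) * H2c k * t ^ k
      = (1 + t) * (∑ k ∈ range (n+1), (n.choose k : ℂ) * H2c k * t ^ k)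
        + (1/((n:ℂ)+1)) * ∑ m ∈ Icc 1 (n+1), ((n+1).choose m : ℂ) * t ^ m / m := by
  rw [Finset.sum_range_succ' (fun k => ((n+1).choose k : ℂ) * H2c k * t ^ k) (n+1)]
  simp only [H2c, Finset.range_zero, Finset.sum_empty, mul_zero, zero_mul, add_zero, pow_zero,
    mul_one]
  have expand : ∀ k ∈ range (n+1),
      ((n+1).choose (k+1) : ℂ) * (∑ j ∈ range (k+1), (1:ℂ)/((j:ℂ)+1)^2) * t ^ (k+1)
      = t * ((n.choose k : ℂ) * (∑ j ∈ range k, (1:ℂ)/((j:ℂ)+1)^2) * t ^ k)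
        + (n.choose (k+1) : ℂ) * (∑ j ∈ range (k+1), (1:ℂ)/((j:ℂ)+1)^2) * t ^ (k+1)
        + t * ((n.choose k : ℂ) * t ^ k / ((k:ℂ)+1)^2) := by
    intro k _
    rw [Nat.choose_succ_succ', Finset.sum_range_succ]
    push_cast
    ring
  rw [Finset.sum_congr rfl expand]
  rw [Finset.sum_add_distrib, Finset.sum_add_distrib, ← Finset.mul_sum, ← Finset.mul_sum]
  have shift : ∑ k ∈ range (n+1), (n.choose (k+1) : ℂ) * (∑ j ∈ range (k+1), (1:ℂ)/((j:ℂ)+1)^2) * t ^ (k+1)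
      = ∑ k ∈ range (n+1), (n.choose k : ℂ) * (∑ j ∈ range k, (1:ℂ)/((j:ℂ)+1)^2) * t ^ k := by
    have h1 := Finset.sum_range_succ'
      (fun k => (n.choose k : ℂ) * (∑ j ∈ range k, (1:ℂ)/((j:ℂ)+1)^2) * t ^ k) (n+1)
    have h2 := Finset.sum_range_succ
      (fun k => (n.choose k : ℂ) * (∑ j ∈ range k, (1:ℂ)/((j:ℂ)+1)^2) * t ^ k) (n+1)
    simp only [Nat.choose_succ_self, Nat.cast_zero, zero_mul, add_zero, Finset.range_zero,
      Finset.sum_empty, mul_zero] at h1 h2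
    rw [h2] at h1
    linear_combination -h1
  rw [shift]
  have third : t * ∑ k ∈ range (n+1), (n.choose k : ℂ) * t ^ k / ((k:ℂ)+1)^2
      = (1/((n:ℂ)+1)) * ∑ m ∈ Icc 1 (n+1), ((n+1).choose m : ℂ) * t ^ m / m := by
    rw [Icc_to_range, Finset.mul_sum, Finset.mul_sum]
    apply Finset.sum_congr rfl
    intro k _
    have hk : ((k:ℂ)+1) ≠ 0 := Nat.cast_add_one_ne_zero k
    have hN : ((n:ℂ)+1) ≠ 0 := Nat.cast_add_one_ne_zero n
    rw [choose_mul n k]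
    push_cast
    field_simp
    ring
  rw [third]
  ring

lemma step_rhs (n : ℕ) (t : ℂ) :
    H2c (n+1) * (1+t)^(n+1)
      - ∑ k ∈ Icc 1 (n+1), ((Hc (n+1) - Hc (n+1-k))/(k:ℂ)) * (1+t)^(n+1-k)
    = (1+t) * (H2c n * (1+t)^n - ∑ k ∈ Icc 1 n, ((Hc n - Hc (n-k))/(k:ℂ)) * (1+t)^(n-k))
      + (1/((n:ℂ)+1)) * ∑ k ∈ Icc 1 (n+1), ((1+t)^k - 1)/(k:ℂ) := by
  have hN : ((n:ℂ)+1) ≠ 0 := Nat.cast_add_one_ne_zero n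
  rw [Icc_succ_top n (fun k => ((Hc (n+1) - Hc (n+1-k))/(k:ℂ)) * (1+t)^(n+1-k))]
  have hsum : ∑ k ∈ Icc 1 n, ((Hc (n+1) - Hc (n+1-k))/(k:ℂ)) * (1+t)^(n+1-k)
      = (1+t) * (∑ k ∈ Icc 1 n, ((Hc n - Hc (n-k))/(k:ℂ)) * (1+t)^(n-k))
        - ∑ k ∈ Icc 1 n, (1/(((n:ℂ)+1) * ((n+1-k : ℕ):ℂ))) * (1+t)^(n+1-k) := by
    rw [Finset.mul_sum, ← Finset.sum_sub_distrib]
    apply Finset.sum_congr rfl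
    intro k hk
    rw [Finset.mem_Icc] at hk
    have h1 : n + 1 - k = (n - k) + 1 := by omega
    rw [h1, Hc_succ n, Hc_succ (n-k), pow_succ]
    have hk0 : ((k:ℂ)) ≠ 0 := by
      exact_mod_cast (by omega : k ≠ 0)
    have hc : ((n-k:ℕ):ℂ) = (n:ℂ) - (k:ℂ) := Nat.cast_sub hk.2
    have hnk : (n:ℂ) - (k:ℂ) + 1 ≠ 0 := by
      rw [← hc]; exact Nat.cast_add_one_ne_zero _
    have hN' : ((n:ℂ)+1) ≠ 0 := Nat.cast_add_one_ne_zero n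
    push_cast [hc]
    field_simp
    ring
  rw [hsum]
  have hrefl : ∑ k ∈ Icc 1 n, (1/(((n:ℂ)+1) * ((n+1-k : ℕ):ℂ))) * (1+t)^(n+1-k)
      = ∑ k ∈ Icc 1 n, (1/(((n:ℂ)+1) * (k:ℂ))) * (1+t)^k :=
    Icc_reflect n (fun j => (1/(((n:ℂ)+1) * (j:ℂ))) * (1+t)^j)
  rw [hrefl]
  have hrefl2 : ∑ k ∈ Icc 1 n, (1/(((n:ℂ)+1) * (k:ℂ))) * (1+t)^k
      = (1/((n:ℂ)+1)) * ∑ k ∈ Icc 1 n, (1+t)^k/(k:ℂ) := by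
    rw [Finset.mul_sum]
    refine Finset.sum_congr rfl (fun k _ => ?_)
    simp only [one_div, mul_inv]
    ring
  rw [hrefl2]
  have hlast : ∑ k ∈ Icc 1 (n+1), ((1+t)^k - 1)/(k:ℂ)
      = (∑ k ∈ Icc 1 n, (1+t)^k/(k:ℂ)) + (1+t)^(n+1)/((n:ℂ)+1) - Hc (n+1) := by
    have e1 : ∑ k ∈ Icc 1 (n+1), ((1+t)^k - 1)/(k:ℂ)
        = (∑ k ∈ Icc 1 (n+1), (1+t)^k/(k:ℂ)) - ∑ k ∈ Icc 1 (n+1), 1/(k:ℂ) := by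
      rw [← Finset.sum_sub_distrib]
      exact Finset.sum_congr rfl (fun k _ => by ring)
    rw [e1, ← Hc_eq_Icc, Icc_succ_top n (fun k => (1+t)^k/(k:ℂ))]
    push_cast
    ring
  rw [hlast, H2c_succ]
  simp only [Nat.sub_self, pow_zero, Nat.cast_add, Nat.cast_one]
  have hHc0 : Hc 0 = 0 := by simp [Hc]
  rw [hHc0]
  generalize (∑ k ∈ Icc 1 n, ((Hc n - Hc (n-k))/(k:ℂ)) * (1+t)^(n-k)) = S1
  generalize (∑ k ∈ Icc 1 n, (1+t)^k/(k:ℂ)) = T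
  generalize Hc (n+1) = Hn1
  generalize H2c n = Qn
  field_simp
  ring

theorem stmt_3 (n : ℕ) (t : ℂ) :
    ∑ k ∈ range (n + 1), (Nat.choose n k : ℂ) * ((H2 k : ℂ)) * t ^ k =
      ((H2 n : ℂ)) * (1 + t) ^ n -
        ∑ k ∈ Icc 1 n, (((H n : ℂ) - (H (n - k) : ℂ)) / (k : ℂ)) * (1 + t) ^ (n - k) := by
  simp only [H_cast, H2_cast]
  induction n with
  | zero => simp [Hc, H2c]
  | succ n ih =>
    rw [step_lhs n t, ih, aux1]
    linear_combination -step_rhs n t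
end

section
/- For every natural number n and all natural numbers r, s with 1 ≤ s ≤ r, ∑_{k=1}^{n} (−1)^{k−1} · (C(n,k)/C(k+r, s)) · H_k = (s/(r−s+1)) · ( ∑_{k=1}^{n} 1/(k · C(n−k+r, r−s+1)) − H_n / C(n+r, r−s+1) ), as an identity of real numbers. -/
open Finset

lemma chne {m N : ℕ} (h : m ≤ N) : ((N.choose m : ℕ) : ℝ) ≠ 0 := by
  exact_mod_cast (Nat.choose_pos h).ne'

lemma key (m N : ℕ) (hm : 1 ≤ m) (h : m ≤ N) :
    (1:ℝ)/(m * (N+1).choose m) = 1/(m * N.choose m) - 1/((m+1) * (N+1).choose (m+1)) := by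
  obtain ⟨t, rfl⟩ : ∃ t, m = t+1 := ⟨m-1, by omega⟩
  have c1 : ((N:ℝ)+1) * (N.choose t) = (N+1).choose (t+1) * (t+1) := by
    exact_mod_cast Nat.add_one_mul_choose_eq N t
  have c2 : (((N+1).choose (t+1) : ℕ):ℝ) = N.choose t + N.choose (t+1) := by
    exact_mod_cast Nat.choose_succ_succ N t
  have c3 : (((N+1).choose (t+2) : ℕ):ℝ) * (t+2) = (N+1).choose (t+1) * ((N:ℝ)-t) := by
    have h3 := Nat.choose_succ_right_eq (N+1) (t+1)
    have := congrArg (fun x : ℕ => (x:ℝ)) h3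
    simp only [show N+1-(t+1) = N-t from by omega] at this
    rw [show ((N+1).choose (t+1) * (N - t) : ℕ) = ((N+1).choose (t+1) : ℕ) * ((N:ℕ) - t) from rfl] at this
    push_cast [Nat.cast_sub (by omega : t ≤ N)] at this
    push_cast
    linarith [this]
  have n0 : (N.choose (t+1) : ℝ) ≠ 0 := chne h
  have n1 : ((N+1).choose (t+1) : ℝ) ≠ 0 := chne (by omega)
  have n2 : ((N+1).choose (t+2) : ℝ) ≠ 0 := chne (by omega)
  have m0 : (t:ℝ)+1 ≠ 0 := by positivity
  have m1 : (t:ℝ)+2 ≠ 0 := by positivity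
  have e1 : (N.choose t : ℝ) * ((N:ℝ)-t) = (t+1) * N.choose (t+1) := by
    nlinarith [c1, c2]
  push_cast
  field_simp
  linear_combination (((N.choose (t+1):ℝ) - ((N+1).choose (t+1):ℝ))) * c3
    + (-((N+1).choose (t+1):ℝ)*((N:ℝ)-t)) * c2
    + (-((N+1).choose (t+1):ℝ)) * e1

lemma lemD (s r : ℕ) (hs : 1 ≤ s) (hr : s ≤ r) :
    (s:ℝ) * ((r.choose s):ℝ) = (((r-s+1:ℕ)):ℝ) * ((r.choose (r-s+1)):ℝ) := by
  have h2 : r.choose s * s = r.choose (s-1) * (r - (s-1)) := by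
    have := Nat.choose_succ_right_eq r (s-1)
    rwa [show s-1+1 = s from by omega] at this
  have h3 : r.choose (s-1) = r.choose (r-s+1) := by
    rw [← Nat.choose_symm (by omega : s-1 ≤ r)]
    congr 1; omega
  have h4 : r - (s-1) = r - s + 1 := by omega
  rw [h3, h4] at h2
  have h5 : s * r.choose s = (r-s+1) * (r.choose (r-s+1)) := by
    rw [Nat.mul_comm]; rw [h2]; exact Nat.mul_comm _ _
  exact_mod_cast h5

lemma lemA (s : ℕ) (hs : 1 ≤ s) : ∀ n : ℕ, ∀ r : ℕ, s ≤ r →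
    ∑ k ∈ range (n+1), (-1:ℝ)^k * (n.choose k) / ((k+r).choose s)
      = (s:ℝ) / ((((r-s+1:ℕ)):ℝ) * (((n+r).choose (r-s+1)) : ℝ)) := by
  intro n
  induction n with
  | zero =>
      intro r hr
      simp only [range_one, sum_singleton, pow_zero, Nat.choose_zero_right, Nat.cast_one,
        zero_add]
      have h1 : (r.choose s : ℝ) ≠ 0 := chne hr
      have hD := lemD s r hs hr
      have h5 : ((r.choose (r-s+1)):ℝ) ≠ 0 := chne (by omega)
      have h6 : (((r-s+1:ℕ)):ℝ) ≠ 0 := by positivity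
      have h7 : (((r-s+1:ℕ)):ℝ) * ((r.choose (r-s+1)):ℝ) ≠ 0 := mul_ne_zero h6 h5
      rw [div_eq_div_iff h1 h7]
      linear_combination -hD
  | succ n ih =>
      intro r hr
      have e0 : ∑ k ∈ range (n+2), (-1:ℝ)^k * ((n+1).choose k) / ((k+r).choose s)
          = ∑ j ∈ range (n+1), (-1:ℝ)^(j+1) * ((n+1).choose (j+1)) / ((j+1+r).choose s)
            + 1/((r).choose s) := by
        rw [Finset.sum_range_succ']
        simp
      have e1 : ∀ j, ((n+1).choose (j+1) : ℝ) = (n.choose j : ℝ) + (n.choose (j+1) : ℝ) := by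
        intro j; exact_mod_cast Nat.choose_succ_succ n j
      have e2 : ∑ j ∈ range (n+1), (-1:ℝ)^(j+1) * ((n+1).choose (j+1)) / ((j+1+r).choose s)
          = (- ∑ j ∈ range (n+1), (-1:ℝ)^j * (n.choose j) / ((j+(r+1)).choose s))
            + ∑ j ∈ range (n+1), (-1:ℝ)^(j+1) * (n.choose (j+1)) / ((j+1+r).choose s) := by
        rw [← Finset.sum_neg_distrib, ← Finset.sum_add_distrib]
        apply Finset.sum_congr rfl
        intro j _
        rw [e1 j, show j+(r+1) = j+1+r from by omega]
        ring
      have e3 : ∑ j ∈ range (n+1), (-1:ℝ)^(j+1) * (n.choose (j+1)) / ((j+1+r).choose s)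
            + 1/((r).choose s)
          = ∑ k ∈ range (n+1), (-1:ℝ)^k * (n.choose k) / ((k+r).choose s) := by
        have h := Finset.sum_range_succ' (fun k => (-1:ℝ)^k * (n.choose k) / ((k+r).choose s)) (n+1)
        rw [Finset.sum_range_succ] at h
        simp only [Nat.choose_succ_self, Nat.cast_zero, mul_zero, zero_div, add_zero,
          pow_zero, Nat.choose_zero_right, Nat.cast_one, one_mul, zero_add] at h
        rw [← h]
      rw [e0, e2, add_assoc, e3, ih r hr, ih (r+1) (by omega)]
      have hm : (r+1)-s+1 = (r-s+1)+1 := by omega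
      have hk := key (r-s+1) (n+r) (by omega) (by omega)
      rw [hm, show n+(r+1) = n+r+1 from by omega, show n+1+r = n+r+1 from by omega]
      push_cast [Nat.cast_sub hr] at hk ⊢
      linear_combination (-(s:ℝ)) * hk

lemma shuffle (a b c d : ℝ) : a/b * (1/(c*d)) = a/c * (1/(b*d)) := by
  rw [div_mul_div_comm, div_mul_div_comm, mul_one,
    show b*(c*d) = c*(b*d) from by ring]

lemma hH_s5 (j : ℕ) : H (j+1) = H j + 1/((j:ℝ)+1) := by
  simp [H, Finset.sum_range_succ]

lemma lemA' (s : ℕ) (hs : 1 ≤ s) (n r : ℕ) (hr : s ≤ r) :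
    ∑ j ∈ range n, (-1:ℝ)^j * (n.choose (j+1)) / ((j+1+r).choose s)
      = 1/((r.choose s):ℝ) - (s:ℝ) / ((((r-s+1:ℕ)):ℝ) * (((n+r).choose (r-s+1)) : ℝ)) := by
  have h := lemA s hs n r hr
  rw [Finset.sum_range_succ'] at h
  simp only [pow_zero, Nat.choose_zero_right, Nat.cast_one, one_mul, zero_add] at h
  have h2 : ∑ j ∈ range n, (-1:ℝ)^(j+1) * (n.choose (j+1)) / ((j+1+r).choose s)
      = - ∑ j ∈ range n, (-1:ℝ)^j * (n.choose (j+1)) / ((j+1+r).choose s) := by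
    rw [← Finset.sum_neg_distrib]
    exact Finset.sum_congr rfl (fun j _ => by ring)
  rw [h2] at h
  linarith [h]

lemma lemS (s : ℕ) (hs : 1 ≤ s) : ∀ n : ℕ, ∀ r : ℕ, s ≤ r →
    ∑ j ∈ range n, (-1:ℝ)^j * (n.choose (j+1)) / ((j+1+r).choose s) * H (j+1)
      = (s:ℝ) / ((((r-s+1:ℕ)):ℝ)) *
        ((∑ j ∈ range n, 1/(((j:ℝ)+1) * (((n-(j+1)+r).choose (r-s+1)):ℝ)))
          - H n / (((n+r).choose (r-s+1)):ℝ)) := by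
  intro n
  induction n with
  | zero =>
      intro r hr
      simp [H]
  | succ n ih =>
      intro r hr
      have e1 : ∀ j, ((n+1).choose (j+1):ℝ) = (n.choose j : ℝ) + (n.choose (j+1) : ℝ) := by
        intro j; exact_mod_cast Nat.choose_succ_succ n j
      have hsplit : ∑ j ∈ range (n+1), (-1:ℝ)^j * ((n+1).choose (j+1)) / ((j+1+r).choose s) * H (j+1)
          = (∑ j ∈ range (n+1), (-1:ℝ)^j * (n.choose (j+1)) / ((j+1+r).choose s) * H (j+1))
            + ∑ j ∈ range (n+1), (-1:ℝ)^j * (n.choose j) / ((j+1+r).choose s) * H (j+1) := by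
        rw [← Finset.sum_add_distrib]
        exact Finset.sum_congr rfl (fun j _ => by rw [e1 j]; ring)
      have hS1 : ∑ j ∈ range (n+1), (-1:ℝ)^j * (n.choose (j+1)) / ((j+1+r).choose s) * H (j+1)
          = ∑ j ∈ range n, (-1:ℝ)^j * (n.choose (j+1)) / ((j+1+r).choose s) * H (j+1) := by
        rw [Finset.sum_range_succ]
        simp [Nat.choose_succ_self]
      have hS2 : ∑ j ∈ range (n+1), (-1:ℝ)^j * (n.choose j) / ((j+1+r).choose s) * H (j+1)
          = (∑ j ∈ range (n+1), (-1:ℝ)^j * (n.choose j) / ((j+1+r).choose s) * H j)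
            + ∑ j ∈ range (n+1), (-1:ℝ)^j * (n.choose j) / ((j+1+r).choose s) * (1/((j:ℝ)+1)) := by
        rw [← Finset.sum_add_distrib]
        exact Finset.sum_congr rfl (fun j _ => by rw [hH_s5 j]; ring)
      have hS2a : ∑ j ∈ range (n+1), (-1:ℝ)^j * (n.choose j) / ((j+1+r).choose s) * H j
          = - ∑ j ∈ range n, (-1:ℝ)^j * (n.choose (j+1)) / ((j+1+(r+1)).choose s) * H (j+1) := by
        rw [Finset.sum_range_succ']
        have hz : H 0 = 0 := by simp [H]
        rw [hz]
        rw [← Finset.sum_neg_distrib]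
        simp only [mul_zero, add_zero]
        refine Finset.sum_congr rfl (fun j _ => ?_)
        rw [show j+1+1+r = j+1+(r+1) from by omega]
        ring
      have hS2b : ∑ j ∈ range (n+1), (-1:ℝ)^j * (n.choose j) / ((j+1+r).choose s) * (1/((j:ℝ)+1))
          = (1/((n:ℝ)+1)) * ∑ j ∈ range (n+1), (-1:ℝ)^j * ((n+1).choose (j+1)) / ((j+1+r).choose s) := by
        rw [Finset.mul_sum]
        refine Finset.sum_congr rfl (fun j hj => ?_)
        have hc : ((n:ℝ)+1) * (n.choose j) = ((n+1).choose (j+1) : ℝ) * ((j:ℝ)+1) := by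
          exact_mod_cast Nat.add_one_mul_choose_eq n j
        have hC : (((j+1+r).choose s : ℕ):ℝ) ≠ 0 := chne (by omega)
        have hj1 : ((j:ℝ)+1) ≠ 0 := by positivity
        have hn1 : ((n:ℝ)+1) ≠ 0 := by positivity
        field_simp
        linear_combination hc
      have hA := lemA' s hs (n+1) r hr
      rw [hsplit, hS1, hS2, hS2a, hS2b, hA, ih r hr, ih (r+1) (by omega)]
      have hm : (r+1)-s+1 = (r-s+1)+1 := by omega
      rw [hm]
      rw [Finset.sum_range_succ (fun j => 1/(((j:ℝ)+1) * (((n+1-(j+1)+r).choose (r-s+1)):ℝ)))]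
      simp only [Nat.succ_sub_succ_eq_sub]
      rw [show n-n+r = r from by omega, hH_s5 n,
        show n+1+r = n+r+1 from by omega, show n+(r+1) = n+r+1 from by omega,
        show (((r-s+1+1:ℕ)):ℝ) = (((r-s+1:ℕ)):ℝ)+1 from by push_cast; ring]
      have hP : ((s:ℝ)/(((r-s+1:ℕ)):ℝ)) * (∑ j ∈ range n, 1/(((j:ℝ)+1) * (((n-j+r).choose (r-s+1)):ℝ)))
          = ((s:ℝ)/(((r-s+1:ℕ)):ℝ)) * (∑ j ∈ range n, 1/(((j:ℝ)+1) * (((n-(j+1)+r).choose (r-s+1)):ℝ)))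
            - ((s:ℝ)/((((r-s+1:ℕ)):ℝ)+1)) * (∑ j ∈ range n, 1/(((j:ℝ)+1) * (((n-(j+1)+(r+1)).choose ((r-s+1)+1)):ℝ))) := by
        rw [Finset.mul_sum, Finset.mul_sum, Finset.mul_sum, ← Finset.sum_sub_distrib]
        refine Finset.sum_congr rfl (fun j hj => ?_)
        have hjn : j < n := Finset.mem_range.mp hj
        have hk := key (r-s+1) (n-(j+1)+r) (by omega) (by omega)
        rw [show n-(j+1)+r+1 = n-j+r from by omega] at hk
        rw [show n-(j+1)+(r+1) = n-(j+1)+r+1 from by omega,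
          show n-(j+1)+r+1 = n-j+r from by omega]
        rw [shuffle (s:ℝ) (((r-s+1:ℕ)):ℝ) ((j:ℝ)+1) (((n-j+r).choose (r-s+1)):ℝ),
          shuffle (s:ℝ) (((r-s+1:ℕ)):ℝ) ((j:ℝ)+1) (((n-(j+1)+r).choose (r-s+1)):ℝ),
          shuffle (s:ℝ) ((((r-s+1:ℕ)):ℝ)+1) ((j:ℝ)+1) (((n-j+r).choose ((r-s+1)+1)):ℝ),
          hk]
        ring
      have keyH := key (r-s+1) (n+r) (by omega) (by omega)
      simp only [← one_div_mul_one_div] at keyH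
      have M0 : (((r-s+1:ℕ)):ℝ) ≠ 0 := by positivity
      have dD : 1/((r.choose s):ℝ) = (s:ℝ)/((((r-s+1:ℕ)):ℝ) * ((r.choose (r-s+1)):ℝ)) := by
        rw [div_eq_div_iff (chne hr) (mul_ne_zero M0 (chne (by omega : r-s+1 ≤ r)))]
        linear_combination (-1:ℝ) * lemD s r hs hr
      rw [show (1:ℝ)/(((n:ℝ)+1) * ((r.choose (r-s+1)):ℝ))
          = (1/((n:ℝ)+1)) * (1/(((r.choose (r-s+1)):ℝ))) from (one_div_mul_one_div _ _).symm]
      linear_combination (-1 : ℝ) * hP + ((s:ℝ) * H n) * keyH + (1/((n:ℝ)+1)) * dD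

theorem stmt_5 (n : ℕ) (r s : ℕ) (hs : 1 ≤ s) (hsr : s ≤ r) :
    ∑ k ∈ Icc 1 n, (-1 : ℝ) ^ (k - 1) * ((Nat.choose n k : ℝ) / (Nat.choose (k + r) s : ℝ)) * H k =
      ((s : ℝ) / (((r - s : ℕ) : ℝ) + 1)) *
        (∑ k ∈ Icc 1 n, 1 / ((k : ℝ) * (Nat.choose (n - k + r) (r - s + 1) : ℝ)) -
          H n / (Nat.choose (n + r) (r - s + 1) : ℝ)) := by
  have hM : (((r-s+1:ℕ)):ℝ) = ((r - s : ℕ) : ℝ) + 1 := by push_cast; ring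
  have e1 : ∑ k ∈ Icc 1 n, (-1 : ℝ) ^ (k - 1) * ((Nat.choose n k : ℝ) / (Nat.choose (k + r) s : ℝ)) * H k
      = ∑ j ∈ range n, (-1:ℝ)^j * (n.choose (j+1)) / ((j+1+r).choose s) * H (j+1) := by
    rw [← Finset.Ico_add_one_right_eq_Icc, Finset.sum_Ico_eq_sum_range]
    simp only [Nat.add_sub_cancel]
    refine Finset.sum_congr rfl (fun j hj => ?_)
    rw [show 1+j-1 = j from by omega, show 1+j = j+1 from by omega, show j+1+r = j+1+r from rfl]
    ring
  have e2 : ∑ k ∈ Icc 1 n, 1 / ((k : ℝ) * (Nat.choose (n - k + r) (r - s + 1) : ℝ))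
      = ∑ j ∈ range n, 1/(((j:ℝ)+1) * (((n-(j+1)+r).choose (r-s+1)):ℝ)) := by
    rw [← Finset.Ico_add_one_right_eq_Icc, Finset.sum_Ico_eq_sum_range]
    simp only [Nat.add_sub_cancel]
    refine Finset.sum_congr rfl (fun j hj => ?_)
    rw [show 1+j = j+1 from by omega]
    push_cast
    ring
  rw [e1, e2, ← hM]
  exact lemS s hs n r hsr
end

section
/- For every natural number n and all natural numbers r, s with 1 ≤ s ≤ r, ∑_{k=0}^{n} (−1)^k · (C(n,k)/C(k+r, s)) · H_k = H_n · ( (s/(r−s+1)) · 1/C(n+r, r−s+1) − 1/C(r, s) ) + s · ∑_{k=0}^{n−1} H_{n−1−k} / ((k+s) · C(r+k+1, r−s+1)), as an identity of real numbers. -/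
open Finset

lemma H_succ (k : ℕ) : H (k+1) = H k + 1/((k:ℝ)+1) := Finset.sum_range_succ _ _

noncomputable def Am (s r n : ℕ) : ℝ :=
  ∑ k ∈ range (n+1), (-1:ℝ)^k * ((Nat.choose n k : ℝ) / (Nat.choose (k+r) s : ℝ))

noncomputable def Gm (s r n : ℕ) : ℝ :=
  ∑ k ∈ range (n+1), (-1:ℝ)^k * ((Nat.choose n k : ℝ) / (Nat.choose (k+r) s : ℝ)) * H k

-- extended sum forms
lemma Am_ext (s r n : ℕ) :
    Am s r n = ∑ k ∈ range (n+2), (-1:ℝ)^k * ((Nat.choose n k : ℝ) / (Nat.choose (k+r) s : ℝ)) := by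
  rw [Am, Finset.sum_range_succ (n := n+1)]
  simp [Nat.choose_succ_self]

lemma Gm_ext (s r n : ℕ) :
    Gm s r n = ∑ k ∈ range (n+2),
      (-1:ℝ)^k * ((Nat.choose n k : ℝ) / (Nat.choose (k+r) s : ℝ)) * H k := by
  rw [Gm, Finset.sum_range_succ (n := n+1)]
  simp [Nat.choose_succ_self]

lemma Am_pascal (s r n : ℕ) :
    Am s r (n+1) = Am s r n - Am s (r+1) n := by
  have e1 : Am s r (n+1)
      = (∑ k ∈ range (n+1), (-1:ℝ)^(k+1) *
          ((Nat.choose (n+1) (k+1) : ℝ) / (Nat.choose (k+1+r) s : ℝ))) + 1/(Nat.choose r s : ℝ) := by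
    rw [Am, Finset.sum_range_succ']
    simp
  have e2 : Am s r n
      = (∑ k ∈ range (n+1), (-1:ℝ)^(k+1) *
          ((Nat.choose n (k+1) : ℝ) / (Nat.choose (k+1+r) s : ℝ))) + 1/(Nat.choose r s : ℝ) := by
    rw [Am_ext, Finset.sum_range_succ']
    simp
  have e3 : Am s (r+1) n
      = ∑ k ∈ range (n+1), (-1:ℝ)^k * ((Nat.choose n k : ℝ) / (Nat.choose (k+1+r) s : ℝ)) := by
    rw [Am]
    refine Finset.sum_congr rfl fun k _ => ?_
    rw [show k+(r+1) = k+1+r by omega]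
  rw [e1, e2, e3]
  have e4 : ∀ k ∈ range (n+1),
      (-1:ℝ)^(k+1) * ((Nat.choose (n+1) (k+1) : ℝ) / (Nat.choose (k+1+r) s : ℝ))
      = (-1:ℝ)^(k+1) * ((Nat.choose n (k+1) : ℝ) / (Nat.choose (k+1+r) s : ℝ))
        - (-1:ℝ)^k * ((Nat.choose n k : ℝ) / (Nat.choose (k+1+r) s : ℝ)) := by
    intro k _
    rw [Nat.choose_succ_succ' n k]
    push_cast
    ring
  rw [Finset.sum_congr rfl e4, Finset.sum_sub_distrib]
  ring

lemma Gm_pascal (s r n : ℕ) :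
    Gm s r (n+1) = Gm s r n - Gm s (r+1) n
      - ∑ k ∈ range (n+1),
          (-1:ℝ)^k * ((Nat.choose n k : ℝ) / (((k:ℝ)+1) * (Nat.choose (k+1+r) s : ℝ))) := by
  have e1 : Gm s r (n+1)
      = ∑ k ∈ range (n+1), (-1:ℝ)^(k+1) *
          ((Nat.choose (n+1) (k+1) : ℝ) / (Nat.choose (k+1+r) s : ℝ)) * H (k+1) := by
    rw [Gm, Finset.sum_range_succ']
    simp [H]
  have e2 : Gm s r n
      = ∑ k ∈ range (n+1), (-1:ℝ)^(k+1) *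
          ((Nat.choose n (k+1) : ℝ) / (Nat.choose (k+1+r) s : ℝ)) * H (k+1) := by
    rw [Gm_ext, Finset.sum_range_succ']
    simp [H]
  have e3 : Gm s (r+1) n
      = ∑ k ∈ range (n+1), (-1:ℝ)^k * ((Nat.choose n k : ℝ) / (Nat.choose (k+1+r) s : ℝ)) * H k := by
    rw [Gm]
    refine Finset.sum_congr rfl fun k _ => ?_
    rw [show k+(r+1) = k+1+r by omega]
  have e4 : ∀ k ∈ range (n+1),
      (-1:ℝ)^(k+1) * ((Nat.choose (n+1) (k+1) : ℝ) / (Nat.choose (k+1+r) s : ℝ)) * H (k+1)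
      = (-1:ℝ)^(k+1) * ((Nat.choose n (k+1) : ℝ) / (Nat.choose (k+1+r) s : ℝ)) * H (k+1)
        - (-1:ℝ)^k * ((Nat.choose n k : ℝ) / (Nat.choose (k+1+r) s : ℝ)) * H k
        - (-1:ℝ)^k * ((Nat.choose n k : ℝ) / (((k:ℝ)+1) * (Nat.choose (k+1+r) s : ℝ))) := by
    intro k _
    rw [Nat.choose_succ_succ' n k, H_succ]
    push_cast
    by_cases hX : (Nat.choose (k+1+r) s : ℝ) = 0
    · simp [hX]
    · field_simp
      ring
  rw [e1, Finset.sum_congr rfl e4, Finset.sum_sub_distrib, Finset.sum_sub_distrib, e2, e3]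

lemma U_eval (s r n : ℕ) (h : s ≤ r) :
    ∑ k ∈ range (n+1),
        (-1:ℝ)^k * ((Nat.choose n k : ℝ) / (((k:ℝ)+1) * (Nat.choose (k+1+r) s : ℝ)))
      = (1/(Nat.choose r s : ℝ) - Am s r (n+1)) / ((n:ℝ)+1) := by
  have e1 : Am s r (n+1)
      = (∑ k ∈ range (n+1), (-1:ℝ)^(k+1) *
          ((Nat.choose (n+1) (k+1) : ℝ) / (Nat.choose (k+1+r) s : ℝ))) + 1/(Nat.choose r s : ℝ) := by
    rw [Am, Finset.sum_range_succ']
    simp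
  have e2 : ∀ k ∈ range (n+1),
      (-1:ℝ)^k * ((Nat.choose n k : ℝ) / (((k:ℝ)+1) * (Nat.choose (k+1+r) s : ℝ)))
      = (-(1/((n:ℝ)+1))) * ((-1:ℝ)^(k+1) *
          ((Nat.choose (n+1) (k+1) : ℝ) / (Nat.choose (k+1+r) s : ℝ))) := by
    intro k _
    have hc : ((n:ℝ)+1) * (Nat.choose n k : ℝ) = (Nat.choose (n+1) (k+1) : ℝ) * ((k:ℝ)+1) := by
      exact_mod_cast Nat.add_one_mul_choose_eq n k
    have hX : (Nat.choose (k+1+r) s : ℝ) ≠ 0 := by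
      have : 0 < Nat.choose (k+1+r) s := Nat.choose_pos (by omega)
      positivity
    have hk : ((k:ℝ)+1) ≠ 0 := by positivity
    have hn : ((n:ℝ)+1) ≠ 0 := by positivity
    field_simp
    linear_combination (-1:ℝ)^k * hc
  rw [Finset.sum_congr rfl e2, ← Finset.mul_sum, e1]
  field_simp
  ring

theorem F_step (n s t : ℕ) (hs : 1 ≤ s) :
    (s:ℝ)/(((t:ℝ)+1) * (Nat.choose (n+s+t) (t+1) : ℝ))
      - (s:ℝ)/(((t:ℝ)+2) * (Nat.choose (n+s+t+1) (t+2) : ℝ))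
      = (s:ℝ)/(((t:ℝ)+1) * (Nat.choose (n+s+t+1) (t+1) : ℝ)) := by
  obtain ⟨u, rfl⟩ : ∃ u, s = u + 1 := ⟨s - 1, by omega⟩
  set m := n + (u+1) + t with hm
  have c1 : ((m:ℝ)+1) * (Nat.choose m (t+1) : ℝ) = (Nat.choose (m+1) (t+2) : ℝ) * ((t:ℝ)+2) := by
    exact_mod_cast Nat.add_one_mul_choose_eq m (t+1)
  have c2 : (Nat.choose (m+1) (t+2) : ℝ) * ((t:ℝ)+2) = (Nat.choose (m+1) (t+1) : ℝ) * ((n:ℝ)+u+1) := by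
    have := Nat.choose_succ_right_eq (m+1) (t+1)
    rw [show m+1-(t+1) = n+u+1 by omega] at this
    exact_mod_cast this
  have p1 : 0 < Nat.choose m (t+1) := Nat.choose_pos (by omega)
  have p2 : 0 < Nat.choose (m+1) (t+1) := Nat.choose_pos (by omega)
  have p3 : 0 < Nat.choose (m+1) (t+2) := Nat.choose_pos (by omega)
  have q1 : (Nat.choose m (t+1) : ℝ) ≠ 0 := by positivity
  have q2 : (Nat.choose (m+1) (t+1) : ℝ) ≠ 0 := by positivity
  have q3 : (Nat.choose (m+1) (t+2) : ℝ) ≠ 0 := by positivity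
  have hmr : (m:ℝ) = (n:ℝ) + ((u:ℝ)+1) + t := by push_cast [hm]; ring
  field_simp
  linear_combination (1:ℝ) *
    ( -((Nat.choose (m+1) (t+1):ℝ))*c1 - (Nat.choose m (t+1):ℝ)*c2
      + (Nat.choose m (t+1):ℝ)*(Nat.choose (m+1) (t+1):ℝ)*hmr )

theorem b_step (k s t : ℕ) (hs : 1 ≤ s) :
    (1:ℝ)/(((k:ℝ)+s) * (Nat.choose (s+t+k+1) (t+1) : ℝ))
      - (1:ℝ)/(((k:ℝ)+s) * (Nat.choose (s+t+k+2) (t+2) : ℝ))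
      = (1:ℝ)/(((k:ℝ)+s+1) * (Nat.choose (s+t+k+2) (t+1) : ℝ)) := by
  set m := s + t + k + 1 with hm
  rw [show s+t+k+2 = m+1 from by omega]
  have c1 : ((m:ℝ)+1) * (Nat.choose m (t+1) : ℝ) = (Nat.choose (m+1) (t+2) : ℝ) * ((t:ℝ)+2) := by
    exact_mod_cast Nat.add_one_mul_choose_eq m (t+1)
  have c2 : (Nat.choose (m+1) (t+2) : ℝ) * ((t:ℝ)+2) = (Nat.choose (m+1) (t+1) : ℝ) * ((k:ℝ)+s+1) := by
    have h := Nat.choose_succ_right_eq (m+1) (t+1)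
    rw [show m+1-(t+1) = k+s+1 by omega] at h
    have h2 : (((m+1).choose (t+2) * (t+2) : ℕ) : ℝ) = (((m+1).choose (t+1) * (k+s+1) : ℕ) : ℝ) := by
      exact_mod_cast congrArg Nat.cast h
    push_cast at h2; linarith [h2]
  have p1 : 0 < Nat.choose m (t+1) := Nat.choose_pos (by omega)
  have p2 : 0 < Nat.choose (m+1) (t+1) := Nat.choose_pos (by omega)
  have p3 : 0 < Nat.choose (m+1) (t+2) := Nat.choose_pos (by omega)
  have q1 : (Nat.choose m (t+1) : ℝ) ≠ 0 := by positivity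
  have hmr : (m:ℝ) = (s:ℝ) + t + k + 1 := by push_cast [hm]; ring
  have hz : (Nat.choose (m+1) (t+2) : ℝ)
      = ((m:ℝ)+1) * (Nat.choose m (t+1) : ℝ) / ((t:ℝ)+2) := by
    field_simp; linarith [c1]
  have hy : (Nat.choose (m+1) (t+1) : ℝ)
      = ((m:ℝ)+1) * (Nat.choose m (t+1) : ℝ) / ((k:ℝ)+s+1) := by
    have hk : ((k:ℝ)+s+1) ≠ 0 := by positivity
    field_simp
    linarith [c1.trans c2]
  rw [hz, hy, hmr]
  have hx : (Nat.choose m (t+1) : ℝ) ≠ 0 := by positivity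
  have hks : ((k:ℝ)+s) ≠ 0 := by positivity
  field_simp
  ring

lemma choose_base (s t : ℕ) (hs : 1 ≤ s) :
    (s:ℝ)/(((t:ℝ)+1) * (Nat.choose (s+t) (t+1) : ℝ)) = 1/(Nat.choose (s+t) s : ℝ) := by
  have h1 : Nat.choose (s+t) (t+1) * (t+1) = Nat.choose (s+t) t * s := by
    have := Nat.choose_succ_right_eq (s+t) t
    rwa [show s+t-t = s by omega] at this
  have h2 : Nat.choose (s+t) t = Nat.choose (s+t) s := by
    have := Nat.choose_symm (n := s+t) (k := s) (by omega)
    rwa [show s+t-s = t by omega] at this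
  rw [h2] at h1
  have c1 : (Nat.choose (s+t) (t+1) : ℝ) * ((t:ℝ)+1) = (Nat.choose (s+t) s : ℝ) * (s:ℝ) := by
    exact_mod_cast h1
  have p1 : 0 < Nat.choose (s+t) (t+1) := Nat.choose_pos (by omega)
  have p2 : 0 < Nat.choose (s+t) s := Nat.choose_pos (by omega)
  have q1 : (Nat.choose (s+t) (t+1) : ℝ) ≠ 0 := by positivity
  have q2 : (Nat.choose (s+t) s : ℝ) ≠ 0 := by positivity
  field_simp
  linear_combination (-1:ℝ)*c1

lemma A_closed (s t n : ℕ) (hs : 1 ≤ s) :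
    Am s (s+t) n = (s:ℝ)/(((t:ℝ)+1) * (Nat.choose (n+s+t) (t+1) : ℝ)) := by
  induction n generalizing t with
  | zero =>
      rw [show (0:ℕ)+s+t = s+t from by omega, choose_base s t hs]
      simp [Am]
  | succ n ih =>
      rw [Am_pascal, ih t, show s+t+1 = s+(t+1) from by omega, ih (t+1)]
      have := F_step n s t hs
      push_cast at this ⊢
      rw [show n+s+(t+1) = n+s+t+1 from by omega, show t+1+1 = t+2 from rfl,
        show n+1+s+t = n+s+t+1 from by omega,
        show ((t:ℝ)+1+1) = ((t:ℝ)+2) from by ring]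
      linarith [this]

lemma main_ind (s : ℕ) (hs : 1 ≤ s) : ∀ n t : ℕ,
    Gm s (s+t) n
      = H n * ((s:ℝ)/(((t:ℝ)+1) * (Nat.choose (n+s+t) (t+1) : ℝ)) - 1/(Nat.choose (s+t) s : ℝ))
        + (s:ℝ) * ∑ k ∈ range n,
            H (n-1-k) * (1/(((k:ℝ)+s) * (Nat.choose (s+t+k+1) (t+1) : ℝ))) := by
  intro n
  induction n with
  | zero => intro t; simp [Gm, H]
  | succ n ih =>
      intro t
      rw [Gm_pascal, U_eval s (s+t) n (by omega), A_closed s t (n+1) hs,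
        ih t, show s+t+1 = s+(t+1) from by omega, ih (t+1)]
      rw [show n+s+(t+1) = n+s+t+1 from by omega]
      rw [show s+(t+1) = s+t+1 from by omega]
      have sum2 : ∑ k ∈ range n,
          H (n-1-k) * (1/(((k:ℝ)+s) * (Nat.choose (s+t+1+k+1) (t+1+1) : ℝ)))
          = ∑ k ∈ range n,
            H (n-1-k) * (1/(((k:ℝ)+s) * (Nat.choose (s+t+k+2) (t+2) : ℝ))) := by
        refine Finset.sum_congr rfl fun k _ => ?_
        rw [show s+t+1+k+1 = s+t+k+2 from by omega]
      rw [sum2]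
      have hstep : ∀ k ∈ range n,
          H (n+1-1-(k+1)) * (1/(((((k+1:ℕ)):ℝ)+(s:ℝ)) * (Nat.choose (s+t+(k+1)+1) (t+1) : ℝ)))
          = H (n-1-k) * (1/(((k:ℝ)+s) * (Nat.choose (s+t+k+1) (t+1) : ℝ)))
            - H (n-1-k) * (1/(((k:ℝ)+s) * (Nat.choose (s+t+k+2) (t+2) : ℝ))) := by
        intro k _
        have hb := b_step k s t hs
        rw [show n+1-1-(k+1) = n-1-k from by omega,
          show s+t+(k+1)+1 = s+t+k+2 from by omega]
        push_cast
        linear_combination (-(H (n-1-k))) * hb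
      have tsum : ∑ k ∈ range (n+1),
          H (n+1-1-k) * (1/(((k:ℝ)+s) * (Nat.choose (s+t+k+1) (t+1) : ℝ)))
          = (∑ k ∈ range n,
              H (n-1-k) * (1/(((k:ℝ)+s) * (Nat.choose (s+t+k+1) (t+1) : ℝ))))
            - (∑ k ∈ range n,
              H (n-1-k) * (1/(((k:ℝ)+s) * (Nat.choose (s+t+k+2) (t+2) : ℝ))))
            + H n * (1/((s:ℝ) * (Nat.choose (s+t+1) (t+1) : ℝ))) := by
        rw [Finset.sum_range_succ', Finset.sum_congr rfl hstep, Finset.sum_sub_distrib,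
          show n+1-1-0 = n from by omega, show s+t+0+1 = s+t+1 from by omega]
        norm_num
      rw [tsum, H_succ n]
      have hsym : ((Nat.choose (s+t+1) s : ℕ) : ℝ) = ((Nat.choose (s+t+1) (t+1) : ℕ) : ℝ) := by
        have h := Nat.choose_symm (n := s+t+1) (k := s) (by omega)
        rw [show s+t+1-s = t+1 from by omega] at h
        exact_mod_cast h.symm
      rw [hsym, show n+1+s+t = n+s+t+1 from by omega, show t+1+1 = t+2 from rfl]
      have hF := F_step n s t hs
      have hb0 : (s:ℝ) * (1/((s:ℝ) * ((Nat.choose (s+t+1) (t+1) : ℕ) : ℝ)))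
          = 1/(((Nat.choose (s+t+1) (t+1) : ℕ) : ℝ)) := by
        have h1 : (0:ℝ) < s := by exact_mod_cast hs
        have h2 : (0:ℝ) < ((Nat.choose (s+t+1) (t+1) : ℕ) : ℝ) := by
          exact_mod_cast Nat.choose_pos (show t+1 ≤ s+t+1 by omega)
        field_simp
      push_cast
      linear_combination (H n) * hF - (H n) * hb0

theorem stmt_9 (n : ℕ) (r s : ℕ) (hs : 1 ≤ s) (hsr : s ≤ r) :
    ∑ k ∈ range (n + 1),
        (-1 : ℝ) ^ k * ((Nat.choose n k : ℝ) / (Nat.choose (k + r) s : ℝ)) * H k =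
      H n * (((s : ℝ) / (((r - s : ℕ) : ℝ) + 1)) * (1 / (Nat.choose (n + r) (r - s + 1) : ℝ)) -
          1 / (Nat.choose r s : ℝ)) +
        (s : ℝ) * ∑ k ∈ range n,
          H (n - 1 - k) / (((k : ℝ) + s) * (Nat.choose (r + k + 1) (r - s + 1) : ℝ)) := by
  obtain ⟨t, rfl⟩ : ∃ t, r = s + t := ⟨r - s, by omega⟩
  have hG : (∑ k ∈ range (n + 1),
      (-1 : ℝ) ^ k * ((Nat.choose n k : ℝ) / (Nat.choose (k + (s+t)) s : ℝ)) * H k)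
      = Gm s (s+t) n := rfl
  rw [hG, main_ind s hs n t,
    show s+t-s = t from by omega, show n+(s+t) = n+s+t from by omega]
  simp only [mul_one_div]
  congr 2
  rw [div_div]
end

section
/- For every natural number n and all natural numbers r, s with 1 ≤ s ≤ r, ∑_{k=0}^{n} (−1)^k · (C(n,k)/C(k+r, s)) · H_k^{(2)} = (s/(r−s+1)) · ( H_n^{(2)} / C(n+r, r−s+1) − ∑_{k=1}^{n} (H_n − H_{n−k}) / (k · C(n−k+r, r−s+1)) ), as an identity of real numbers. -/
open Finset

lemma alt_pascal (n : ℕ) (f : ℕ → ℝ) :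
    ∑ k ∈ range (n+2), (-1:ℝ)^k * ((n+1).choose k : ℝ) * f k
      = ∑ k ∈ range (n+1), (-1:ℝ)^k * (n.choose k : ℝ) * f k
        - ∑ k ∈ range (n+1), (-1:ℝ)^k * (n.choose k : ℝ) * f (k+1) := by
  rw [Finset.sum_range_succ' _ (n+1), Finset.sum_range_succ'
      (fun k => (-1:ℝ)^k * (n.choose k : ℝ) * f k) n]
  have h1 : ∀ i, (-1:ℝ)^(i+1) * (((n+1).choose (i+1) : ℕ) : ℝ) * f (i+1)
      = -((-1:ℝ)^i * (n.choose i : ℝ) * f (i+1)) - (-1:ℝ)^i * (n.choose (i+1) : ℝ) * f (i+1) := by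
    intro i
    rw [Nat.choose_succ_succ]
    push_cast
    ring
  rw [Finset.sum_congr rfl (fun i _ => h1 i)]
  rw [Finset.sum_sub_distrib, Finset.sum_neg_distrib]
  have h2 : ∑ i ∈ range (n+1), (-1:ℝ)^i * (n.choose (i+1) : ℝ) * f (i+1)
      = ∑ i ∈ range n, (-1:ℝ)^i * (n.choose (i+1) : ℝ) * f (i+1) := by
    rw [Finset.sum_range_succ, Nat.choose_succ_self]
    simp
  rw [h2]
  have h3 : ∑ i ∈ range n, (-1:ℝ)^(i+1) * ((n.choose (i+1) : ℕ) : ℝ) * f (i+1)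
      = - ∑ i ∈ range n, (-1:ℝ)^i * (n.choose (i+1) : ℝ) * f (i+1) := by
    rw [← Finset.sum_neg_distrib]
    exact Finset.sum_congr rfl (fun i _ => by ring)
  simp only [Nat.choose_zero_right, Nat.cast_one, pow_zero]
  linarith [h3]


-- K0 : (s/(u+1)) * (1/C(s+u, u+1)) = 1/C(s+u, s)
lemma K0 (s u : ℕ) (hs : 1 ≤ s) :
    (s:ℝ)/((u:ℝ)+1) * (1 / ((s+u).choose (u+1) : ℝ)) = 1 / ((s+u).choose s : ℝ) := by
  obtain ⟨p, rfl⟩ : ∃ p, s = p + 1 := ⟨s - 1, by omega⟩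
  have h1 : ((p+1+u).choose (p+1)) * (p+1) = (p+1+u).choose p * (u+1) := by
    have := Nat.choose_succ_right_eq (p+1+u) p
    rw [this]; congr 1; omega
  have h2 : (p+1+u).choose p = (p+1+u).choose (u+1) := by
    have := Nat.choose_symm (n := p+1+u) (k := u+1) (by omega)
    rw [← this]; congr 1; omega
  have c1 : (0:ℝ) < ((p+1+u).choose (p+1) : ℝ) := by
    exact_mod_cast Nat.choose_pos (by omega)
  have c2 : (0:ℝ) < ((p+1+u).choose (u+1) : ℝ) := by
    exact_mod_cast Nat.choose_pos (by omega)
  have h1' : (((p+1+u).choose (p+1)):ℝ) * ((p:ℝ)+1) = ((p+1+u).choose (u+1) : ℝ) * ((u:ℝ)+1) := by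
    rw [← h2]; exact_mod_cast h1
  field_simp
  push_cast
  linear_combination h1'

-- K1
lemma K1 (s u a : ℕ) (hs : 1 ≤ s) :
    (s:ℝ)/((u:ℝ)+1) * (1 / (((a+1)+(s+u)).choose (u+1) : ℝ))
      = (s:ℝ)/((u:ℝ)+1) * (1 / ((a+(s+u)).choose (u+1) : ℝ))
        - (s:ℝ)/((u:ℝ)+2) * (1 / ((a+(s+(u+1))).choose (u+2) : ℝ)) := by
  set N := a + (s+u) with hN
  have e0 : (a+1)+(s+u) = N + 1 := by omega
  have e1 : a+(s+(u+1)) = N + 1 := by omega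
  rw [e0, e1]
  have h1 : (N+1) * N.choose (u+1) = (N+1).choose (u+2) * (u+2) := Nat.add_one_mul_choose_eq N (u+1)
  have h2 : N.choose (u+1) * (N+1) = (N+1).choose (u+1) * (a+s) := by
    have := Nat.choose_mul_succ_eq N (u+1)
    rw [this]; congr 1; omega
  have c0 : (0:ℝ) < (N.choose (u+1) : ℝ) := by exact_mod_cast Nat.choose_pos (by omega)
  have c1 : (0:ℝ) < ((N+1).choose (u+2) : ℝ) := by exact_mod_cast Nat.choose_pos (by omega)
  have c2 : (0:ℝ) < ((N+1).choose (u+1) : ℝ) := by exact_mod_cast Nat.choose_pos (by omega)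
  have h1' : ((N:ℝ)+1) * (N.choose (u+1) : ℝ) = ((N+1).choose (u+2) : ℝ) * ((u:ℝ)+2) := by
    exact_mod_cast h1
  have h2' : (N.choose (u+1) : ℝ) * ((N:ℝ)+1) = ((N+1).choose (u+1) : ℝ) * ((a:ℝ)+(s:ℝ)) := by
    exact_mod_cast h2
  have hs' : (0:ℝ) < (s:ℝ) := by exact_mod_cast hs
  have hNr : ((N:ℝ)) = (a:ℝ) + (s:ℝ) + (u:ℝ) := by push_cast [hN]; ring
  field_simp
  linear_combination ((((N+1).choose (u+1) : ℝ) - (N.choose (u+1) : ℝ)))*h1'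
    + ((N.choose (u+1) : ℝ))*h2'
    - (((N+1).choose (u+1) : ℝ)*(N.choose (u+1) : ℝ))*hNr



noncomputable def Ff (s u n : ℕ) : ℝ :=
  ∑ k ∈ range (n+1), (-1:ℝ)^k * (n.choose k : ℝ) * (1 / ((k+(s+u)).choose s : ℝ))

noncomputable def Dd (s u n : ℕ) : ℝ :=
  ∑ j ∈ range n, (-1:ℝ)^(j+1) * (n.choose (j+1) : ℝ)
      * (1 / (((j:ℝ)+1) * (((j+1)+(s+u)).choose s : ℝ)))

noncomputable def SC (s u n : ℕ) : ℝ :=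
  ∑ j ∈ range n, 1 / ((((j:ℝ)+1)) * (((j+1)+(s+u)).choose (u+1) : ℝ))

noncomputable def Aa (s u n : ℕ) : ℝ :=
  ∑ k ∈ range (n+1), (-1:ℝ)^k * (n.choose k : ℝ) * (H2 k / ((k+(s+u)).choose s : ℝ))

noncomputable def Rr (s u n : ℕ) : ℝ :=
  ((s:ℝ)/((u:ℝ)+1)) * (H2 n / ((n+(s+u)).choose (u+1) : ℝ)
    - ∑ a ∈ range n, (H n - H a) / ((((n-a : ℕ)):ℝ) * ((a+(s+u)).choose (u+1) : ℝ)))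

-- recurrence for Ff
lemma recF (s u n : ℕ) : Ff s u (n+1) = Ff s u n - Ff s (u+1) n := by
  show ∑ k ∈ range (n+2), (-1:ℝ)^k * ((n+1).choose k : ℝ) * (1 / ((k+(s+u)).choose s : ℝ)) = _
  rw [alt_pascal n (fun k => 1 / ((k+(s+u)).choose s : ℝ))]
  congr 1
  apply Finset.sum_congr rfl
  intro k _
  have : (k+1)+(s+u) = k+(s+(u+1)) := by omega
  rw [this]

lemma L0 (s : ℕ) (hs : 1 ≤ s) : ∀ n u : ℕ,
    Ff s u n = (s:ℝ)/((u:ℝ)+1) * (1 / ((n+(s+u)).choose (u+1) : ℝ)) := by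
  intro n
  induction n with
  | zero =>
    intro u
    show ∑ k ∈ range 1, _ = _
    rw [Finset.sum_range_one]
    simp only [pow_zero, Nat.choose_zero_right, Nat.cast_one, one_mul, zero_add]
    rw [K0 s u hs]
  | succ n ih =>
    intro u
    rw [recF, ih u, ih (u+1)]
    have h := K1 s u n hs
    simp only [show u+1+1 = u+2 from rfl] at *
    push_cast at h ⊢
    ring_nf at h ⊢
    linarith [h]

lemma recD (s u n : ℕ) (hs : 1 ≤ s) :
    Dd s u (n+1) = Dd s u n + (Ff s u (n+1) - 1 / ((s+u).choose s : ℝ)) / ((n:ℝ)+1) := by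
  have peel : Ff s u (n+1)
      = (∑ j ∈ range (n+1), (-1:ℝ)^(j+1) * ((n+1).choose (j+1) : ℝ)
          * (1 / (((j+1)+(s+u)).choose s : ℝ))) + 1 / ((s+u).choose s : ℝ) := by
    show ∑ k ∈ range (n+2), _ = _
    rw [Finset.sum_range_succ' (fun k => (-1:ℝ)^k * ((n+1).choose k : ℝ)
        * (1 / ((k+(s+u)).choose s : ℝ))) (n+1)]
    simp
  rw [peel]
  show ∑ j ∈ range (n+1), (-1:ℝ)^(j+1) * ((n+1).choose (j+1) : ℝ)
      * (1 / (((j:ℝ)+1) * (((j+1)+(s+u)).choose s : ℝ))) = _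
  have split : ∀ j ∈ range (n+1),
      (-1:ℝ)^(j+1) * ((n+1).choose (j+1) : ℝ)
        * (1 / (((j:ℝ)+1) * (((j+1)+(s+u)).choose s : ℝ)))
      = (-1:ℝ)^(j+1) * (n.choose (j+1) : ℝ)
          * (1 / (((j:ℝ)+1) * (((j+1)+(s+u)).choose s : ℝ)))
        + ((-1:ℝ)^(j+1) * ((n+1).choose (j+1) : ℝ)
            * (1 / (((j+1)+(s+u)).choose s : ℝ))) / ((n:ℝ)+1) := by
    intro j _
    have hc : ((n:ℝ)+1) * (n.choose j : ℝ) = ((n+1).choose (j+1) : ℝ) * ((j:ℝ)+1) := by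
      exact_mod_cast Nat.add_one_mul_choose_eq n j
    have hp' : ((n+1).choose (j+1) : ℝ) = (n.choose j : ℝ) + (n.choose (j+1) : ℝ) := by
      exact_mod_cast Nat.choose_succ_succ n j
    have hj1 : ((j:ℝ)+1) ≠ 0 := by positivity
    have hn1 : ((n:ℝ)+1) ≠ 0 := by positivity
    have hcs : (((j+1)+(s+u)).choose s : ℝ) ≠ 0 := by
      have : (0:ℝ) < (((j+1)+(s+u)).choose s : ℝ) := by
        exact_mod_cast Nat.choose_pos (by omega)
      linarith
    have key : ((n+1).choose (j+1) : ℝ) * (1 / (((j:ℝ)+1) * (((j+1)+(s+u)).choose s : ℝ)))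
        = (n.choose (j+1) : ℝ) * (1 / (((j:ℝ)+1) * (((j+1)+(s+u)).choose s : ℝ)))
          + ((n.choose j : ℝ)) * (1 / (((j:ℝ)+1) * (((j+1)+(s+u)).choose s : ℝ))) := by
      rw [hp']; ring
    have key2 : ((n.choose j : ℝ)) * (1 / (((j:ℝ)+1) * (((j+1)+(s+u)).choose s : ℝ)))
        = (((n+1).choose (j+1) : ℝ) * (1 / (((j+1)+(s+u)).choose s : ℝ))) / ((n:ℝ)+1) := by
      field_simp
      linear_combination hc
    calc (-1:ℝ)^(j+1) * ((n+1).choose (j+1) : ℝ)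
        * (1 / (((j:ℝ)+1) * (((j+1)+(s+u)).choose s : ℝ)))
        = (-1:ℝ)^(j+1) * (((n.choose (j+1) : ℝ))
            * (1 / (((j:ℝ)+1) * (((j+1)+(s+u)).choose s : ℝ)))
          + ((n.choose j : ℝ)) * (1 / (((j:ℝ)+1) * (((j+1)+(s+u)).choose s : ℝ)))) := by
          rw [mul_assoc, key]
      _ = _ := by rw [key2]; ring
  rw [Finset.sum_congr rfl split, Finset.sum_add_distrib]
  congr 1
  · show _ = Dd s u n
    rw [Finset.sum_range_succ, Nat.choose_succ_self]
    simp [Dd]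
  · rw [← Finset.sum_div]
    congr 1
    ring

lemma LD (s u : ℕ) (hs : 1 ≤ s) : ∀ n : ℕ,
    Dd s u n = (s:ℝ)/((u:ℝ)+1) * SC s u n - H n * (1 / ((s+u).choose s : ℝ)) := by
  intro n
  induction n with
  | zero => simp [Dd, SC, H]
  | succ n ih =>
    rw [recD s u n hs, ih, L0 s hs (n+1) u]
    have hSC : SC s u (n+1) = SC s u n + 1 / ((((n:ℝ)+1)) * (((n+1)+(s+u)).choose (u+1) : ℝ)) := by
      rw [SC, Finset.sum_range_succ]; rfl
    have hH : H (n+1) = H n + 1/((n:ℝ)+1) := by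
      rw [H, Finset.sum_range_succ]; rfl
    rw [hSC, hH]
    have hn1 : ((n:ℝ)+1) ≠ 0 := by positivity
    have hcg : (((n+1)+(s+u)).choose (u+1) : ℝ) ≠ 0 := by
      have : (0:ℝ) < (((n+1)+(s+u)).choose (u+1) : ℝ) := by
        exact_mod_cast Nat.choose_pos (by omega)
      linarith
    have hcs : (((s+u)).choose s : ℝ) ≠ 0 := by
      have : (0:ℝ) < (((s+u)).choose s : ℝ) := by
        exact_mod_cast Nat.choose_pos (by omega)
      linarith
    field_simp
    ring

lemma recA (s u n : ℕ) :
    Aa s u (n+1) = Aa s u n - Aa s (u+1) n + Dd s u (n+1) / ((n:ℝ)+1) := by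
  have h2succ : ∀ k : ℕ, H2 (k+1) = H2 k + 1/((k:ℝ)+1)^2 := by
    intro k; rw [H2, Finset.sum_range_succ]; rfl
  show ∑ k ∈ range (n+2), (-1:ℝ)^k * ((n+1).choose k : ℝ) * (H2 k / ((k+(s+u)).choose s : ℝ)) = _
  rw [alt_pascal n (fun k => H2 k / ((k+(s+u)).choose s : ℝ))]
  have key : ∀ k ∈ range (n+1),
      (-1:ℝ)^k * (n.choose k : ℝ) * (H2 (k+1) / (((k+1)+(s+u)).choose s : ℝ))
      = (-1:ℝ)^k * (n.choose k : ℝ) * (H2 k / ((k+(s+(u+1))).choose s : ℝ))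
        - ((-1:ℝ)^(k+1) * ((n+1).choose (k+1) : ℝ)
            * (1 / (((k:ℝ)+1) * (((k+1)+(s+u)).choose s : ℝ)))) / ((n:ℝ)+1) := by
    intro k _
    have e1 : k+(s+(u+1)) = (k+1)+(s+u) := by omega
    rw [e1, h2succ k]
    have hc : ((n:ℝ)+1) * (n.choose k : ℝ) = ((n+1).choose (k+1) : ℝ) * ((k:ℝ)+1) := by
      exact_mod_cast Nat.add_one_mul_choose_eq n k
    have hk1 : ((k:ℝ)+1) ≠ 0 := by positivity
    have hn1 : ((n:ℝ)+1) ≠ 0 := by positivity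
    have hcs : ((((k+1)+(s+u)).choose s) : ℝ) ≠ 0 := by
      have : (0:ℝ) < ((((k+1)+(s+u)).choose s) : ℝ) := by
        exact_mod_cast Nat.choose_pos (by omega)
      linarith
    have key2 : ((n.choose k : ℝ)) * (1/((k:ℝ)+1)^2 / ((((k+1)+(s+u)).choose s) : ℝ))
        = (((n+1).choose (k+1) : ℝ) * (1 / (((k:ℝ)+1) * ((((k+1)+(s+u)).choose s) : ℝ))))
            / ((n:ℝ)+1) := by
      field_simp
      linear_combination hc
    calc (-1:ℝ)^k * (n.choose k : ℝ) * ((H2 k + 1/((k:ℝ)+1)^2) / ((((k+1)+(s+u)).choose s) : ℝ))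
        = (-1:ℝ)^k * (n.choose k : ℝ) * (H2 k / ((((k+1)+(s+u)).choose s) : ℝ))
          + (-1:ℝ)^k * ((n.choose k : ℝ) * (1/((k:ℝ)+1)^2 / ((((k+1)+(s+u)).choose s) : ℝ))) := by
          ring
      _ = _ := by rw [key2]; ring
  rw [Finset.sum_congr rfl key, Finset.sum_sub_distrib]
  have : ∑ k ∈ range (n+1), ((-1:ℝ)^(k+1) * ((n+1).choose (k+1) : ℝ)
      * (1 / (((k:ℝ)+1) * (((k+1)+(s+u)).choose s : ℝ)))) / ((n:ℝ)+1)
      = Dd s u (n+1) / ((n:ℝ)+1) := by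
    rw [← Finset.sum_div]; rfl
  rw [this]
  show Aa s u n - (Aa s (u+1) n - Dd s u (n+1) / ((n:ℝ)+1)) = _
  ring

lemma recR (s u n : ℕ) (hs : 1 ≤ s) :
    Rr s u (n+1) = Rr s u n - Rr s (u+1) n
      + ((s:ℝ)/((u:ℝ)+1) * SC s u (n+1) - H (n+1) * (1 / ((s+u).choose s : ℝ))) / ((n:ℝ)+1) := by
  have hH : ∀ k : ℕ, H (k+1) = H k + 1/((k:ℝ)+1) := by
    intro k; simp only [H]; rw [Finset.sum_range_succ]
  have hH2 : H2 (n+1) = H2 n + 1/((n:ℝ)+1)^2 := by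
    simp only [H2]; rw [Finset.sum_range_succ]
  have hH0 : H 0 = 0 := by simp [H]
  have hcpos : ∀ a : ℕ, (0:ℝ) < ((a+(s+u)).choose (u+1) : ℝ) := by
    intro a; exact_mod_cast Nat.choose_pos (by omega)
  -- adapted K1
  have hK : ∀ a : ℕ, (s:ℝ)/((u:ℝ)+1) * (1 / (((a+1)+(s+u)).choose (u+1) : ℝ))
      = (s:ℝ)/((u:ℝ)+1) * (1 / ((a+(s+u)).choose (u+1) : ℝ))
        - (s:ℝ)/(((u+1:ℕ):ℝ)+1) * (1 / ((a+(s+(u+1))).choose ((u+1)+1) : ℝ)) := by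
    intro a
    have h := K1 s u a hs
    simp only [show (u+1)+1 = u+2 from rfl]
    push_cast at h ⊢
    ring_nf at h ⊢
    linarith [h]
  -- combine Rr n u - Rr n (u+1)
  have comb : Rr s u n - Rr s (u+1) n
      = (s:ℝ)/((u:ℝ)+1) * (H2 n / (((n+1)+(s+u)).choose (u+1) : ℝ)
          - ∑ a ∈ range n, (H n - H a) / (((n-a : ℕ):ℝ) * (((a+1)+(s+u)).choose (u+1) : ℝ))) := by
    simp only [Rr]
    rw [mul_sub, mul_sub, mul_sub, Finset.mul_sum, Finset.mul_sum, Finset.mul_sum]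
    have hterm : ∀ a ∈ range n,
        (s:ℝ)/((u:ℝ)+1) * ((H n - H a) / (((n-a : ℕ):ℝ) * ((a+(s+u)).choose (u+1) : ℝ)))
          - (s:ℝ)/(((u+1:ℕ):ℝ)+1) * ((H n - H a) / (((n-a : ℕ):ℝ) * ((a+(s+(u+1))).choose ((u+1)+1) : ℝ)))
        = (s:ℝ)/((u:ℝ)+1) * ((H n - H a) / (((n-a : ℕ):ℝ) * (((a+1)+(s+u)).choose (u+1) : ℝ))) := by
      intro a _
      have rw1 : ∀ (x q cc : ℝ), x/(q*cc) = (x/q) * (1/cc) := by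
        intro x q cc; rw [← div_div, div_eq_mul_one_div]
      rw [rw1, rw1, rw1]
      calc (s:ℝ)/((u:ℝ)+1) * ((H n - H a)/(((n-a : ℕ):ℝ)) * (1/((a+(s+u)).choose (u+1) : ℝ)))
            - (s:ℝ)/(((u+1:ℕ):ℝ)+1) * ((H n - H a)/(((n-a : ℕ):ℝ)) * (1/((a+(s+(u+1))).choose ((u+1)+1) : ℝ)))
          = ((H n - H a)/(((n-a : ℕ):ℝ)))
              * ((s:ℝ)/((u:ℝ)+1) * (1/((a+(s+u)).choose (u+1) : ℝ))
                - (s:ℝ)/(((u+1:ℕ):ℝ)+1) * (1/((a+(s+(u+1))).choose ((u+1)+1) : ℝ))) := by ring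
        _ = ((H n - H a)/(((n-a : ℕ):ℝ)))
              * ((s:ℝ)/((u:ℝ)+1) * (1 / (((a+1)+(s+u)).choose (u+1) : ℝ))) := by rw [← hK a]
        _ = (s:ℝ)/((u:ℝ)+1) * ((H n - H a)/(((n-a : ℕ):ℝ)) * (1/(((a+1)+(s+u)).choose (u+1) : ℝ))) := by
              ring
    have hH2part : (s:ℝ)/((u:ℝ)+1) * (H2 n / ((n+(s+u)).choose (u+1) : ℝ))
        - (s:ℝ)/(((u+1:ℕ):ℝ)+1) * (H2 n / ((n+(s+(u+1))).choose ((u+1)+1) : ℝ))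
        = (s:ℝ)/((u:ℝ)+1) * (H2 n / (((n+1)+(s+u)).choose (u+1) : ℝ)) := by
      have hk := hK n
      calc (s:ℝ)/((u:ℝ)+1) * (H2 n / ((n+(s+u)).choose (u+1) : ℝ))
            - (s:ℝ)/(((u+1:ℕ):ℝ)+1) * (H2 n / ((n+(s+(u+1))).choose ((u+1)+1) : ℝ))
          = H2 n * ((s:ℝ)/((u:ℝ)+1) * (1/((n+(s+u)).choose (u+1) : ℝ))
              - (s:ℝ)/(((u+1:ℕ):ℝ)+1) * (1/((n+(s+(u+1))).choose ((u+1)+1) : ℝ))) := by ring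
        _ = H2 n * ((s:ℝ)/((u:ℝ)+1) * (1 / (((n+1)+(s+u)).choose (u+1) : ℝ))) := by rw [← hk]
        _ = (s:ℝ)/((u:ℝ)+1) * (H2 n / (((n+1)+(s+u)).choose (u+1) : ℝ)) := by ring
    have hsum : (∑ a ∈ range n, (s:ℝ)/((u:ℝ)+1) * ((H n - H a) / (((n-a : ℕ):ℝ) * ((a+(s+u)).choose (u+1) : ℝ))))
        - (∑ a ∈ range n, (s:ℝ)/(((u+1:ℕ):ℝ)+1) * ((H n - H a) / (((n-a : ℕ):ℝ) * ((a+(s+(u+1))).choose ((u+1)+1) : ℝ))))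
        = ∑ a ∈ range n, (s:ℝ)/((u:ℝ)+1) * ((H n - H a) / (((n-a : ℕ):ℝ) * (((a+1)+(s+u)).choose (u+1) : ℝ))) := by
      rw [← Finset.sum_sub_distrib]
      exact Finset.sum_congr rfl hterm
    linarith [hH2part, hsum]
  rw [comb]
  simp only [Rr]
  have peel : ∑ a ∈ range (n+1), (H (n+1) - H a) / (((n+1-a : ℕ):ℝ) * ((a+(s+u)).choose (u+1):ℝ))
      = (∑ i ∈ range n, (H (n+1) - H (i+1)) / (((n-i : ℕ):ℝ) * (((i+1)+(s+u)).choose (u+1):ℝ)))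
        + H (n+1) / (((n+1:ℕ):ℝ) * ((s+u).choose (u+1):ℝ)) := by
    rw [Finset.sum_range_succ' (fun a => (H (n+1) - H a) / (((n+1-a : ℕ):ℝ)
        * ((a+(s+u)).choose (u+1):ℝ))) n]
    congr 1
    · apply Finset.sum_congr rfl
      intro i _
      have e : n+1-(i+1) = n-i := by omega
      rw [e]
    · rw [hH0]
      norm_num
  have hstep : ∀ i ∈ range n,
      (H (n+1) - H (i+1)) / (((n-i : ℕ):ℝ) * (((i+1)+(s+u)).choose (u+1):ℝ))
      = (H n - H i) / (((n-i : ℕ):ℝ) * (((i+1)+(s+u)).choose (u+1):ℝ))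
        - 1/(((i:ℝ)+1) * ((n:ℝ)+1) * (((i+1)+(s+u)).choose (u+1):ℝ)) := by
    intro i hi
    have hi' : i < n := Finset.mem_range.mp hi
    have hcast : ((n-i : ℕ):ℝ) = (n:ℝ) - (i:ℝ) := by
      exact_mod_cast Nat.cast_sub hi'.le
    have hne : (n:ℝ) - (i:ℝ) ≠ 0 := by
      have : (i:ℝ) < (n:ℝ) := by exact_mod_cast hi'
      linarith
    have hcp : (((i+1)+(s+u)).choose (u+1):ℝ) ≠ 0 := ne_of_gt (hcpos (i+1))
    rw [hH n, hH i, hcast]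
    have h1 : ((i:ℝ)+1) ≠ 0 := by positivity
    have h2 : ((n:ℝ)+1) ≠ 0 := by positivity
    field_simp
    ring
  have hsplit : ∑ i ∈ range n, (H (n+1) - H (i+1)) / (((n-i : ℕ):ℝ) * (((i+1)+(s+u)).choose (u+1):ℝ))
      = (∑ i ∈ range n, (H n - H i) / (((n-i : ℕ):ℝ) * (((i+1)+(s+u)).choose (u+1):ℝ)))
        - ∑ i ∈ range n, 1/(((i:ℝ)+1) * ((n:ℝ)+1) * (((i+1)+(s+u)).choose (u+1):ℝ)) := by
    rw [Finset.sum_congr rfl hstep, Finset.sum_sub_distrib]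
  have hU : ∑ i ∈ range n, 1/(((i:ℝ)+1) * ((n:ℝ)+1) * (((i+1)+(s+u)).choose (u+1):ℝ))
      = SC s u n / ((n:ℝ)+1) := by
    simp only [SC]
    rw [Finset.sum_div]
    apply Finset.sum_congr rfl
    intro i _
    rw [div_div]
    ring_nf
  have hSC : SC s u (n+1) = SC s u n + 1 / (((n:ℝ)+1) * (((n+1)+(s+u)).choose (u+1):ℝ)) := by
    simp only [SC]
    rw [Finset.sum_range_succ]
  have hK0 := K0 s u hs
  rw [peel, hsplit, hU, hSC, hH2, ← hK0]
  have hn1 : ((n:ℝ)+1) ≠ 0 := by positivity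
  have hu1 : ((u:ℝ)+1) ≠ 0 := by positivity
  have hc1 : (((n+1)+(s+u)).choose (u+1):ℝ) ≠ 0 := ne_of_gt (hcpos (n+1))
  have hc0 : (((s+u)).choose (u+1):ℝ) ≠ 0 := by
    have : (0:ℝ) < (((s+u)).choose (u+1):ℝ) := by
      exact_mod_cast Nat.choose_pos (by omega)
    linarith
  push_cast
  field_simp
  ring

lemma main (s : ℕ) (hs : 1 ≤ s) : ∀ n u : ℕ, Aa s u n = Rr s u n := by
  intro n
  induction n with
  | zero =>
    intro u
    show ∑ k ∈ range 1, _ = _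
    rw [Finset.sum_range_one]
    simp [Aa, Rr, H2]
  | succ n ih =>
    intro u
    rw [recA, ih u, ih (u+1), LD s u hs (n+1), recR s u n hs]

theorem stmt_11 (n : ℕ) (r s : ℕ) (hs : 1 ≤ s) (hsr : s ≤ r) :
    ∑ k ∈ range (n + 1),
        (-1 : ℝ) ^ k * ((Nat.choose n k : ℝ) / (Nat.choose (k + r) s : ℝ)) * H2 k =
      ((s : ℝ) / (((r - s : ℕ) : ℝ) + 1)) *
        (H2 n / (Nat.choose (n + r) (r - s + 1) : ℝ) -
          ∑ k ∈ Icc 1 n, (H n - H (n - k)) / ((k : ℝ) * (Nat.choose (n - k + r) (r - s + 1) : ℝ))) := by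
  obtain ⟨u, rfl⟩ : ∃ u, r = s + u := ⟨r - s, by omega⟩
  simp only [show s + u - s = u from by omega]
  have hbij : ∑ k ∈ Icc 1 n, (H n - H (n-k)) / ((k:ℝ) * (((n-k+(s+u)).choose (u+1)):ℝ))
      = ∑ a ∈ range n, (H n - H a) / (((n-a:ℕ):ℝ) * (((a+(s+u)).choose (u+1)):ℝ)) := by
    apply Finset.sum_nbij' (i := fun k => n - k) (j := fun a => n - a)
    · intro k hk
      simp only [Finset.mem_Icc] at hk
      simp only [Finset.mem_range]
      omega
    · intro a ha
      simp only [Finset.mem_range] at ha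
      simp only [Finset.mem_Icc]
      omega
    · intro k hk
      simp only [Finset.mem_Icc] at hk
      omega
    · intro a ha
      simp only [Finset.mem_range] at ha
      omega
    · intro k hk
      simp only [Finset.mem_Icc] at hk
      have e1 : n - (n - k) = k := by omega
      rw [e1]
  calc ∑ k ∈ range (n + 1),
        (-1 : ℝ) ^ k * ((Nat.choose n k : ℝ) / (Nat.choose (k + (s+u)) s : ℝ)) * H2 k
      = Aa s u n := by
        simp only [Aa]
        apply Finset.sum_congr rfl
        intro k _
        ring
    _ = Rr s u n := main s hs n u
    _ = _ := by
        simp only [Rr]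
        rw [hbij]
end

section
/- For every natural number n, ∑_{k=0}^{n} (−1)^{k+1} · C(n,k) · H_k^{(2)}/(k+1) = (H_n² + H_n^{(2)}) / (2(n+1)), as an identity of real numbers. -/
open Finset

lemma alt_sum (m r : ℕ) :
    ∑ i ∈ range (r + 1), (-1 : ℝ) ^ i * (Nat.choose (m + 1) i : ℝ)
      = (-1) ^ r * (Nat.choose m r : ℝ) := by
  induction r with
  | zero => simp
  | succ r ih =>
    rw [sum_range_succ, ih, Nat.choose_succ_succ m r]
    push_cast
    ring

lemma alt_shift (n r : ℕ) :
    ∑ k ∈ range r, (-1 : ℝ) ^ (k + 1) * (Nat.choose (n + 1) (k + 1) : ℝ)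
      = (-1) ^ r * (Nat.choose n r : ℝ) - 1 := by
  have h := sum_range_succ' (fun i => (-1 : ℝ) ^ i * (Nat.choose (n + 1) i : ℝ)) r
  rw [alt_sum n r] at h
  simp only [pow_zero, Nat.choose_zero_right, Nat.cast_one, one_mul] at h
  linarith

lemma choose_div (n j : ℕ) :
    (Nat.choose n j : ℝ) / (j + 1) = (Nat.choose (n + 1) (j + 1) : ℝ) / (n + 1) := by
  have h := Nat.add_one_mul_choose_eq n j
  have h' : ((n + 1) * Nat.choose n j : ℝ) = (Nat.choose (n + 1) (j + 1) : ℝ) * (j + 1) := by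
    exact_mod_cast congrArg (Nat.cast (R := ℝ)) h
  have hn : ((n : ℝ) + 1) ≠ 0 := by positivity
  have hj : ((j : ℝ) + 1) ≠ 0 := by positivity
  field_simp
  push_cast at h' ⊢
  linarith

lemma V_lemma (n : ℕ) :
    ∑ j ∈ range n, (-1 : ℝ) ^ j * (Nat.choose n (j + 1) : ℝ) / (j + 1) = H n := by
  induction n with
  | zero => simp [H]
  | succ n ih =>
    have split : ∀ j ∈ range (n + 1),
        (-1 : ℝ) ^ j * (Nat.choose (n + 1) (j + 1) : ℝ) / (j + 1)
          = (-1 : ℝ) ^ j * (Nat.choose n j : ℝ) / (j + 1)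
            + (-1 : ℝ) ^ j * (Nat.choose n (j + 1) : ℝ) / (j + 1) := by
      intro j _
      rw [Nat.choose_succ_succ n j]
      push_cast
      ring
    rw [sum_congr rfl split, sum_add_distrib]
    have h1 : ∑ j ∈ range (n + 1), (-1 : ℝ) ^ j * (Nat.choose n j : ℝ) / (j + 1)
        = 1 / (n + 1) := by
      have e : ∀ j ∈ range (n + 1),
          (-1 : ℝ) ^ j * (Nat.choose n j : ℝ) / (j + 1)
            = -((-1 : ℝ) ^ (j + 1) * (Nat.choose (n + 1) (j + 1) : ℝ)) / (n + 1) := by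
        intro j _
        rw [mul_div_assoc, choose_div n j]
        ring
      rw [sum_congr rfl e, ← sum_div, sum_neg_distrib, alt_shift n (n + 1)]
      rw [Nat.choose_succ_self]
      simp
    have h2 : ∑ j ∈ range (n + 1), (-1 : ℝ) ^ j * (Nat.choose n (j + 1) : ℝ) / (j + 1)
        = H n := by
      rw [sum_range_succ, Nat.choose_succ_self, ih]
      simp
    rw [h1, h2]
    simp [H, sum_range_succ]
    ring

lemma U_lemma (n : ℕ) :
    ∑ j ∈ range n, (-1 : ℝ) ^ j * (Nat.choose n (j + 1) : ℝ) / ((j : ℝ) + 1) ^ 2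
      = (H n ^ 2 + H2 n) / 2 := by
  induction n with
  | zero => simp [H, H2]
  | succ n ih =>
    have split : ∀ j ∈ range (n + 1),
        (-1 : ℝ) ^ j * (Nat.choose (n + 1) (j + 1) : ℝ) / ((j : ℝ) + 1) ^ 2
          = (-1 : ℝ) ^ j * (Nat.choose n j : ℝ) / ((j : ℝ) + 1) ^ 2
            + (-1 : ℝ) ^ j * (Nat.choose n (j + 1) : ℝ) / ((j : ℝ) + 1) ^ 2 := by
      intro j _
      rw [Nat.choose_succ_succ n j]
      push_cast
      ring
    rw [sum_congr rfl split, sum_add_distrib]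
    have h1 : ∑ j ∈ range (n + 1), (-1 : ℝ) ^ j * (Nat.choose n j : ℝ) / ((j : ℝ) + 1) ^ 2
        = H (n + 1) / (n + 1) := by
      have e : ∀ j ∈ range (n + 1),
          (-1 : ℝ) ^ j * (Nat.choose n j : ℝ) / ((j : ℝ) + 1) ^ 2
            = ((-1 : ℝ) ^ j * (Nat.choose (n + 1) (j + 1) : ℝ) / (j + 1)) / (n + 1) := by
        intro j _
        have hc := Nat.add_one_mul_choose_eq n j
        have hc' : ((n : ℝ) + 1) * (Nat.choose n j : ℝ)
            = (Nat.choose (n + 1) (j + 1) : ℝ) * ((j : ℝ) + 1) := by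
          exact_mod_cast congrArg (Nat.cast (R := ℝ)) hc
        have hj : ((j : ℝ) + 1) ≠ 0 := by positivity
        have hn : ((n : ℝ) + 1) ≠ 0 := by positivity
        field_simp
        linear_combination hc'
      rw [sum_congr rfl e, ← sum_div, V_lemma (n + 1)]
    have h2 : ∑ j ∈ range (n + 1), (-1 : ℝ) ^ j * (Nat.choose n (j + 1) : ℝ) / ((j : ℝ) + 1) ^ 2
        = (H n ^ 2 + H2 n) / 2 := by
      rw [sum_range_succ, Nat.choose_succ_self, ih]
      simp
    rw [h1, h2]
    have hH : H (n + 1) = H n + 1 / (n + 1) := by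
      simp [H, sum_range_succ]
    have hH2 : H2 (n + 1) = H2 n + 1 / ((n : ℝ) + 1) ^ 2 := by
      simp [H2, sum_range_succ]
    have hn : ((n : ℝ) + 1) ≠ 0 := by positivity
    rw [hH, hH2]
    field_simp
    ring

lemma swap_sum (N : ℕ) (f : ℕ → ℕ → ℝ) :
    ∑ k ∈ range N, ∑ j ∈ range k, f j k
      = ∑ j ∈ range N, ∑ k ∈ Ico (j + 1) N, f j k := by
  induction N with
  | zero => simp
  | succ N ih =>
    rw [sum_range_succ, ih, sum_range_succ]
    have e : ∀ j ∈ range N,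
        ∑ k ∈ Ico (j + 1) (N + 1), f j k = (∑ k ∈ Ico (j + 1) N, f j k) + f j N := by
      intro j hj
      rw [Finset.sum_Ico_succ_top (by simp at hj; omega : j + 1 ≤ N)]
    rw [sum_congr rfl e, sum_add_distrib]
    simp

lemma inner_eval (n j : ℕ) (hj : j ≤ n) :
    ∑ k ∈ Ico (j + 1) (n + 1), (-1 : ℝ) ^ (k + 1) * (Nat.choose n k : ℝ) / (k + 1)
      = (-1 : ℝ) ^ j * (Nat.choose n (j + 1) : ℝ) / (n + 1) := by
  have e : ∀ k, (-1 : ℝ) ^ (k + 1) * (Nat.choose n k : ℝ) / (k + 1)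
      = (-1 : ℝ) ^ (k + 1) * (Nat.choose (n + 1) (k + 1) : ℝ) / (n + 1) := by
    intro k
    rw [mul_div_assoc, choose_div n k, mul_div_assoc]
  simp only [e]
  rw [Finset.sum_Ico_eq_sub _ (by omega : j + 1 ≤ n + 1)]
  rw [← sum_div, ← sum_div]
  rw [alt_shift n (n + 1), alt_shift n (j + 1)]
  rw [Nat.choose_succ_self]
  push_cast
  ring

theorem stmt_13 (n : ℕ) :
    ∑ k ∈ range (n + 1), (-1 : ℝ) ^ (k + 1) * (Nat.choose n k : ℝ) * H2 k / ((k : ℝ) + 1) =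
      (H n ^ 2 + H2 n) / (2 * ((n : ℝ) + 1)) := by
  have step1 : ∀ k ∈ range (n + 1),
      (-1 : ℝ) ^ (k + 1) * (Nat.choose n k : ℝ) * H2 k / ((k : ℝ) + 1)
        = ∑ j ∈ range k,
            ((-1 : ℝ) ^ (k + 1) * (Nat.choose n k : ℝ) / ((k : ℝ) + 1))
              * ((1 : ℝ) / ((j : ℝ) + 1) ^ 2) := by
    intro k _
    rw [← mul_sum]
    simp only [H2]
    ring
  rw [sum_congr rfl step1, swap_sum]
  have step2 : ∀ j ∈ range (n + 1),
      ∑ k ∈ Ico (j + 1) (n + 1),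
          ((-1 : ℝ) ^ (k + 1) * (Nat.choose n k : ℝ) / ((k : ℝ) + 1))
            * ((1 : ℝ) / ((j : ℝ) + 1) ^ 2)
        = ((-1 : ℝ) ^ j * (Nat.choose n (j + 1) : ℝ) / ((j : ℝ) + 1) ^ 2) / (n + 1) := by
    intro j hj
    rw [← sum_mul, inner_eval n j (by simp at hj; omega)]
    ring
  rw [sum_congr rfl step2, ← sum_div, sum_range_succ, Nat.choose_succ_self, U_lemma n]
  push_cast
  field_simp
  ring
end

section
/- For every natural number n and all natural numbers r, s with 1 ≤ s ≤ r, ∑_{k=0}^{n} C(n,k) / ((k+2)(k+s) · C(n+r, k+s)) = ∑_{k=0}^{n} (−1)^k · C(n,k) / ((k+1)(k+2)(k+s) · C(k+r, k+s)), as an identity of real numbers. -/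
open Finset

lemma lemB : ∀ n y : ℕ, ∑ j ∈ range (n+1), (-1:ℝ)^j * (Nat.choose n j) / (j + y + 1)
    = (Nat.factorial n) * (Nat.factorial y) / (Nat.factorial (n+y+1)) := by
  intro n
  induction n with
  | zero =>
    intro y
    have : ((y:ℝ) + 1) ≠ 0 := by positivity
    simp [Nat.factorial_succ]
    field_simp
  | succ n ih =>
    intro y
    have key : ∑ j ∈ range (n+2), (-1:ℝ)^j * (Nat.choose (n+1) j) / (j + y + 1)
        = (∑ j ∈ range (n+1), (-1:ℝ)^j * (Nat.choose n j) / (j + y + 1))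
          - (∑ j ∈ range (n+1), (-1:ℝ)^j * (Nat.choose n j) / (j + (y+1) + 1)) := by
      rw [Finset.sum_range_succ' (fun j => (-1:ℝ)^j * (Nat.choose (n+1) j) / (j + y + 1))]
      have expand : ∀ i ∈ range (n+1),
          (-1:ℝ)^(i+1) * (Nat.choose (n+1) (i+1)) / ((i+1:ℕ) + y + 1)
          = (-1:ℝ)^(i+1) * (Nat.choose n (i+1)) / ((i+1:ℕ) + y + 1)
            - (-1:ℝ)^i * (Nat.choose n i) / ((i:ℕ) + (y+1) + 1) := by
        intro i _
        rw [Nat.choose_succ_succ]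
        push_cast
        rw [pow_succ]
        ring
      rw [Finset.sum_congr rfl expand, Finset.sum_sub_distrib]
      have h0 : ((Nat.choose (n+1) 0 : ℕ) : ℝ) = ((Nat.choose n 0 : ℕ) : ℝ) := by
        simp
      have hback : (∑ i ∈ range (n+1), (-1:ℝ)^(i+1) * (Nat.choose n (i+1)) / ((i+1:ℕ) + y + 1))
            + (-1:ℝ)^0 * ((Nat.choose n 0 : ℕ) : ℝ) / ((0:ℕ) + y + 1)
          = ∑ j ∈ range (n+1), (-1:ℝ)^j * (Nat.choose n j) / (j + y + 1) := by
        rw [← Finset.sum_range_succ' (fun j => (-1:ℝ)^j * (Nat.choose n j) / (j + y + 1))]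
        rw [Finset.sum_range_succ]
        simp
      rw [h0]
      linarith [hback]
    rw [key, ih y]
    have ih2 := ih (y+1)
    push_cast at ih2
    rw [ih2]
    have h1 : (Nat.factorial (n+1+y+1) : ℝ) = (n+y+2) * Nat.factorial (n+y+1) := by
      rw [show n+1+y+1 = (n+y+1)+1 by ring, Nat.factorial_succ]; push_cast; ring
    have h2 : (Nat.factorial (n+(y+1)+1) : ℝ) = (n+y+2) * Nat.factorial (n+y+1) := by
      rw [show n+(y+1)+1 = (n+y+1)+1 by ring, Nat.factorial_succ]; push_cast; ring
    have h3 : (Nat.factorial (y+1) : ℝ) = (y+1) * Nat.factorial y := by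
      rw [Nat.factorial_succ]; push_cast; ring
    have h4 : (Nat.factorial (n+1) : ℝ) = (n+1) * Nat.factorial n := by
      rw [Nat.factorial_succ]; push_cast; ring
    have hf : (Nat.factorial (n+y+1) : ℝ) ≠ 0 := by positivity
    rw [h1, h2, h3, h4]
    have hy2 : ((n:ℝ)+y+2) ≠ 0 := by positivity
    field_simp
    ring

lemma lemA_s14 (t : ℕ) : ∀ M e : ℕ,
    ∑ m ∈ range (M+1), (-1:ℝ)^m * (Nat.choose M m) / (Nat.choose (m + (t+1+e)) (t+1))
    = ((t:ℝ)+1) * (Nat.factorial e) * (Nat.factorial (M+t)) / (Nat.factorial (M+t+1+e)) := by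
  intro M
  induction M with
  | zero =>
    intro e
    have hle : t+1 ≤ t+1+e := by omega
    have hchoose := Nat.choose_mul_factorial_mul_factorial hle
    rw [show t+1+e-(t+1) = e by omega] at hchoose
    have hcpos : (0:ℝ) < (Nat.choose (t+1+e) (t+1) : ℝ) := by
      exact_mod_cast Nat.choose_pos hle
    have hfe : (Nat.factorial e : ℝ) ≠ 0 := by positivity
    have hft : (Nat.factorial t : ℝ) ≠ 0 := by positivity
    have hC : (Nat.choose (t+1+e) (t+1) : ℝ) * ((t+1) * Nat.factorial t) * (Nat.factorial e)
        = (Nat.factorial (t+1+e) : ℝ) := by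
      have : (Nat.factorial (t+1) : ℝ) = (t+1) * Nat.factorial t := by
        rw [Nat.factorial_succ]; push_cast; ring
      rw [← this]
      exact_mod_cast congrArg (Nat.cast : ℕ → ℝ) hchoose
    simp only [range_one, sum_singleton, pow_zero, Nat.choose_zero_right, Nat.cast_one,
      one_mul, zero_add, Nat.zero_add]
    rw [← hC]
    field_simp
  | succ M ih =>
    intro e
    have key : ∑ m ∈ range (M+2), (-1:ℝ)^m * (Nat.choose (M+1) m) / (Nat.choose (m + (t+1+e)) (t+1))
        = (∑ m ∈ range (M+1), (-1:ℝ)^m * (Nat.choose M m) / (Nat.choose (m + (t+1+e)) (t+1)))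
          - (∑ m ∈ range (M+1), (-1:ℝ)^m * (Nat.choose M m) / (Nat.choose (m + (t+1+(e+1))) (t+1))) := by
      rw [Finset.sum_range_succ' (fun m => (-1:ℝ)^m * (Nat.choose (M+1) m) / (Nat.choose (m + (t+1+e)) (t+1)))]
      have expand : ∀ i ∈ range (M+1),
          (-1:ℝ)^(i+1) * (Nat.choose (M+1) (i+1)) / (Nat.choose ((i+1) + (t+1+e)) (t+1))
          = (-1:ℝ)^(i+1) * (Nat.choose M (i+1)) / (Nat.choose ((i+1) + (t+1+e)) (t+1))
            - (-1:ℝ)^i * (Nat.choose M i) / (Nat.choose (i + (t+1+(e+1))) (t+1)) := by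
        intro i _
        rw [Nat.choose_succ_succ, show i + (t+1+(e+1)) = (i+1)+(t+1+e) by omega]
        push_cast
        rw [pow_succ]
        ring
      rw [Finset.sum_congr rfl expand, Finset.sum_sub_distrib]
      have h0 : ((Nat.choose (M+1) 0 : ℕ) : ℝ) = ((Nat.choose M 0 : ℕ) : ℝ) := by simp
      have hback : (∑ i ∈ range (M+1), (-1:ℝ)^(i+1) * (Nat.choose M (i+1)) / (Nat.choose ((i+1) + (t+1+e)) (t+1)))
            + (-1:ℝ)^0 * ((Nat.choose M 0 : ℕ) : ℝ) / (Nat.choose (0 + (t+1+e)) (t+1))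
          = ∑ m ∈ range (M+1), (-1:ℝ)^m * (Nat.choose M m) / (Nat.choose (m + (t+1+e)) (t+1)) := by
        rw [← Finset.sum_range_succ' (fun m => (-1:ℝ)^m * (Nat.choose M m) / (Nat.choose (m + (t+1+e)) (t+1)))]
        rw [Finset.sum_range_succ]
        simp
      rw [h0]
      linarith [hback]
    rw [key, ih e, ih (e+1)]
    have h1 : (Nat.factorial (M+1+t+1+e) : ℝ) = (M+t+e+2) * Nat.factorial (M+t+1+e) := by
      rw [show M+1+t+1+e = (M+t+1+e)+1 by ring, Nat.factorial_succ]; push_cast; ring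
    have h2 : (Nat.factorial (M+t+1+(e+1)) : ℝ) = (M+t+e+2) * Nat.factorial (M+t+1+e) := by
      rw [show M+t+1+(e+1) = (M+t+1+e)+1 by ring, Nat.factorial_succ]; push_cast; ring
    have h3 : (Nat.factorial (e+1) : ℝ) = (e+1) * Nat.factorial e := by
      rw [Nat.factorial_succ]; push_cast; ring
    have h4 : (Nat.factorial (M+1+t) : ℝ) = (M+t+1) * Nat.factorial (M+t) := by
      rw [show M+1+t = (M+t)+1 by ring, Nat.factorial_succ]; push_cast; ring
    have hf : (Nat.factorial (M+t+1+e) : ℝ) ≠ 0 := by positivity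
    have hg : ((M:ℝ)+t+e+2) ≠ 0 := by positivity
    rw [h1, h2, h3, h4]
    field_simp
    ring

lemma shiftSum (g : ℕ → ℝ) (n j : ℕ) (hj : j ≤ n) :
    ∑ k ∈ range (n+1), ((Nat.choose n k : ℝ) * (Nat.choose k j : ℝ)) * g k
    = (Nat.choose n j : ℝ) * ∑ m ∈ range (n - j + 1), (Nat.choose (n-j) m : ℝ) * g (j+m) := by
  have hsub : Ico j (n+1) ⊆ range (n+1) := by
    rw [range_eq_Ico]; exact Ico_subset_Ico (Nat.zero_le _) le_rfl
  rw [← Finset.sum_subset hsub (by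
    intro k hk hk'
    have : k < j := by
      simp [mem_range] at hk
      simp [mem_Ico] at hk'
      omega
    rw [Nat.choose_eq_zero_of_lt this]
    simp)]
  rw [Finset.sum_Ico_eq_sum_range]
  rw [show n + 1 - j = n - j + 1 by omega]
  rw [Finset.mul_sum]
  apply Finset.sum_congr rfl
  intro m hm
  simp only [mem_range] at hm
  have hkn : j + m ≤ n := by omega
  have hch := Nat.choose_mul (n := n) (k := j+m) (s := j) (by omega)
  rw [show j + m - j = m by omega] at hch
  have : (Nat.choose n (j+m) : ℝ) * (Nat.choose (j+m) j : ℝ) = (Nat.choose n j : ℝ) * (Nat.choose (n-j) m : ℝ) := by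
    exact_mod_cast congrArg (Nat.cast : ℕ → ℝ) hch
  rw [this]
  ring

lemma altR (N : ℕ) : ∑ m ∈ range (N+1), (-1:ℝ)^m * (Nat.choose N m) = if N = 0 then 1 else 0 := by
  have h := Int.alternating_sum_range_choose (n := N)
  have h2 := congrArg (Int.cast : ℤ → ℝ) h
  push_cast at h2
  rw [h2]

lemma invLem (f : ℕ → ℝ) (n : ℕ) :
    ∑ k ∈ range (n+1), (-1:ℝ)^k * (Nat.choose n k) *
      (∑ j ∈ range (k+1), (-1:ℝ)^j * (Nat.choose k j) * f j) = f n := by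
  have step1 : ∀ k ∈ range (n+1),
      (-1:ℝ)^k * (Nat.choose n k) * (∑ j ∈ range (k+1), (-1:ℝ)^j * (Nat.choose k j) * f j)
      = ∑ j ∈ range (n+1), ((Nat.choose n k : ℝ) * (Nat.choose k j : ℝ)) * ((-1:ℝ)^k * (-1:ℝ)^j * f j) := by
    intro k hk
    simp only [mem_range] at hk
    have hext : ∑ j ∈ range (k+1), (-1:ℝ)^j * (Nat.choose k j) * f j
        = ∑ j ∈ range (n+1), (-1:ℝ)^j * (Nat.choose k j) * f j := by
      apply Finset.sum_subset (by rw [range_subset_range]; omega)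
      intro j hj hj'
      simp only [mem_range] at hj hj'
      rw [Nat.choose_eq_zero_of_lt (by omega)]
      simp
    rw [hext, Finset.mul_sum]
    apply Finset.sum_congr rfl
    intro j _
    ring
  rw [Finset.sum_congr rfl step1, Finset.sum_comm]
  have step2 : ∀ j ∈ range (n+1),
      ∑ k ∈ range (n+1), ((Nat.choose n k : ℝ) * (Nat.choose k j : ℝ)) * ((-1:ℝ)^k * (-1:ℝ)^j * f j)
      = (if j = n then f n else 0) := by
    intro j hj
    simp only [mem_range] at hj
    rw [shiftSum (fun k => (-1:ℝ)^k * (-1:ℝ)^j * f j) n j (by omega)]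
    have inner : ∑ m ∈ range (n-j+1), (Nat.choose (n-j) m : ℝ) * ((-1:ℝ)^(j+m) * (-1:ℝ)^j * f j)
        = ((-1:ℝ)^j * (-1:ℝ)^j * f j) * ∑ m ∈ range (n-j+1), (-1:ℝ)^m * (Nat.choose (n-j) m) := by
      rw [Finset.mul_sum]
      apply Finset.sum_congr rfl
      intro m _
      rw [pow_add]
      ring
    rw [inner, altR]
    by_cases h : j = n
    · subst h
      rw [if_pos rfl, Nat.sub_self]
      simp only [if_pos rfl, Nat.choose_self, Nat.cast_one, one_mul, mul_one]
      rw [show (-1:ℝ)^j * (-1:ℝ)^j = 1 by rw [← pow_add, show j+j = 2*j by ring, pow_mul]; simp]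
      simp
    · rw [if_neg (by omega), if_neg h]
      simp
  rw [Finset.sum_congr rfl step2, Finset.sum_ite_eq' (range (n+1)) n (fun _ => f n)]
  simp
lemma starLem (r s : ℕ) (hs : 1 ≤ s) (hsr : s ≤ r) (n : ℕ) :
    ∑ k ∈ range (n+1), (-1:ℝ)^k * (Nat.choose n k) *
      (∑ j ∈ range (k+1), (Nat.choose k j : ℝ) /
        (((j:ℝ)+2) * ((j:ℝ)+s) * (Nat.choose (k+r) (j+s) : ℝ)))
    = 1 / (((n:ℝ)+1) * ((n:ℝ)+2) * ((n:ℝ)+s) * (Nat.choose (n+r) (n+s) : ℝ)) := by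
  have hs0 : (0:ℝ) < s := by exact_mod_cast hs
  have step1 : ∀ k ∈ range (n+1),
      (-1:ℝ)^k * (Nat.choose n k) *
        (∑ j ∈ range (k+1), (Nat.choose k j : ℝ) /
          (((j:ℝ)+2) * ((j:ℝ)+s) * (Nat.choose (k+r) (j+s) : ℝ)))
      = ∑ j ∈ range (n+1), ((Nat.choose n k : ℝ) * (Nat.choose k j : ℝ)) *
          ((-1:ℝ)^k / (((j:ℝ)+2) * ((j:ℝ)+s) * (Nat.choose (k+r) (j+s) : ℝ))) := by
    intro k hk
    simp only [mem_range] at hk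
    have hext : ∑ j ∈ range (k+1), (Nat.choose k j : ℝ) /
          (((j:ℝ)+2) * ((j:ℝ)+s) * (Nat.choose (k+r) (j+s) : ℝ))
        = ∑ j ∈ range (n+1), (Nat.choose k j : ℝ) /
          (((j:ℝ)+2) * ((j:ℝ)+s) * (Nat.choose (k+r) (j+s) : ℝ)) := by
      apply Finset.sum_subset (by rw [range_subset_range]; omega)
      intro j hj hj'
      simp only [mem_range] at hj hj'
      rw [Nat.choose_eq_zero_of_lt (by omega)]
      simp
    rw [hext, Finset.mul_sum]
    apply Finset.sum_congr rfl
    intro j _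
    ring
  rw [Finset.sum_congr rfl step1, Finset.sum_comm]
  set K : ℝ := (Nat.factorial (r-s) : ℝ) * (Nat.factorial (n+(s-1)) : ℝ) / (Nat.factorial (n+r) : ℝ) with hK
  have step2 : ∀ j ∈ range (n+1),
      ∑ k ∈ range (n+1), ((Nat.choose n k : ℝ) * (Nat.choose k j : ℝ)) *
          ((-1:ℝ)^k / (((j:ℝ)+2) * ((j:ℝ)+s) * (Nat.choose (k+r) (j+s) : ℝ)))
      = K * ((-1:ℝ)^j * (Nat.choose n j : ℝ) / ((j:ℝ) + 1 + 1)) := by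
    intro j hj
    simp only [mem_range] at hj
    have hjn : j ≤ n := by omega
    rw [shiftSum (fun k => (-1:ℝ)^k / (((j:ℝ)+2) * ((j:ℝ)+s) * (Nat.choose (k+r) (j+s) : ℝ))) n j hjn]
    have hre : ∀ m ∈ range (n-j+1),
        (Nat.choose (n-j) m : ℝ) * ((-1:ℝ)^(j+m) /
          (((j:ℝ)+2) * ((j:ℝ)+s) * (Nat.choose ((j+m)+r) (j+s) : ℝ)))
        = ((-1:ℝ)^j / (((j:ℝ)+2) * ((j:ℝ)+s))) *
          ((-1:ℝ)^m * (Nat.choose (n-j) m : ℝ) /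
            (Nat.choose (m + ((j+(s-1))+1+(r-s))) ((j+(s-1))+1) : ℝ)) := by
      intro m hm
      simp only [mem_range] at hm
      rw [show m + ((j+(s-1))+1+(r-s)) = (j+m)+r by omega,
          show (j+(s-1))+1 = j+s by omega, pow_add]
      have hcpos : (0:ℝ) < (Nat.choose ((j+m)+r) (j+s) : ℝ) := by
        exact_mod_cast Nat.choose_pos (show j+s ≤ (j+m)+r by omega)
      have h2 : ((j:ℝ)+2) ≠ 0 := by positivity
      have h3 : ((j:ℝ)+s) ≠ 0 := by positivity
      field_simp
    rw [Finset.sum_congr rfl hre, ← Finset.mul_sum, lemA_s14 (j+(s-1)) (n-j) (r-s)]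
    rw [show (n-j)+(j+(s-1)) = n+(s-1) by omega,
        show n+(s-1)+1+(r-s) = n+r by omega]
    have hcast : ((j+(s-1):ℕ):ℝ) + 1 = (j:ℝ) + s := by
      push_cast [Nat.cast_sub hs]
      ring
    rw [hcast]
    have h2 : ((j:ℝ)+2) ≠ 0 := by positivity
    have h3 : ((j:ℝ)+s) ≠ 0 := by positivity
    have h4 : (Nat.factorial (n+r) : ℝ) ≠ 0 := by positivity
    rw [hK]
    field_simp
    ring
  rw [Finset.sum_congr rfl step2, ← Finset.mul_sum]
  have hB := lemB n 1
  push_cast at hB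
  rw [hB]
  -- final algebra
  have hchoose := Nat.choose_mul_factorial_mul_factorial (show n+s ≤ n+r by omega)
  rw [show n+r-(n+s) = r-s by omega] at hchoose
  have hC : (Nat.choose (n+r) (n+s) : ℝ) * (Nat.factorial (n+s) : ℝ) * (Nat.factorial (r-s) : ℝ)
      = (Nat.factorial (n+r) : ℝ) := by exact_mod_cast congrArg (Nat.cast : ℕ → ℝ) hchoose
  have hns : (Nat.factorial (n+s) : ℝ) = ((n:ℝ)+s) * (Nat.factorial (n+(s-1)) : ℝ) := by
    rw [show n+s = (n+(s-1))+1 by omega, Nat.factorial_succ]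
    push_cast [Nat.cast_sub hs]
    ring
  have hn2 : (Nat.factorial (n+1+1) : ℝ) = ((n:ℝ)+2) * ((n:ℝ)+1) * (Nat.factorial n : ℝ) := by
    rw [show n+1+1 = (n+1)+1 by rfl, Nat.factorial_succ, Nat.factorial_succ]
    push_cast
    ring
  have hcpos : (0:ℝ) < (Nat.choose (n+r) (n+s) : ℝ) := by
    exact_mod_cast Nat.choose_pos (show n+s ≤ n+r by omega)
  have hf1 : (Nat.factorial (n+r) : ℝ) ≠ 0 := by positivity
  have hf2 : (Nat.factorial (n+(s-1)) : ℝ) ≠ 0 := by positivity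
  have hf3 : (Nat.factorial n : ℝ) ≠ 0 := by positivity
  have hf4 : (Nat.factorial (r-s) : ℝ) ≠ 0 := by positivity
  have h1 : ((n:ℝ)+1) ≠ 0 := by positivity
  have h2 : ((n:ℝ)+2) ≠ 0 := by positivity
  have h3 : ((n:ℝ)+s) ≠ 0 := by positivity
  rw [hK, hn2]
  rw [← hC, hns]
  field_simp
  ring

theorem stmt_14 (n : ℕ) (r s : ℕ) (hs : 1 ≤ s) (hsr : s ≤ r) :
    ∑ k ∈ range (n + 1),
        (Nat.choose n k : ℝ) /
          (((k : ℝ) + 2) * ((k : ℝ) + s) * (Nat.choose (n + r) (k + s) : ℝ)) =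
      ∑ k ∈ range (n + 1),
        (-1 : ℝ) ^ k * (Nat.choose n k : ℝ) /
          (((k : ℝ) + 1) * ((k : ℝ) + 2) * ((k : ℝ) + s) * (Nat.choose (k + r) (k + s) : ℝ)) := by
  set f : ℕ → ℝ := fun k => ∑ j ∈ range (k+1), (Nat.choose k j : ℝ) /
      (((j:ℝ)+2) * ((j:ℝ)+s) * (Nat.choose (k+r) (j+s) : ℝ)) with hf
  have hinv := invLem f n
  have hstep : ∀ k ∈ range (n+1),
      (-1:ℝ)^k * (Nat.choose n k) * (∑ j ∈ range (k+1), (-1:ℝ)^j * (Nat.choose k j) * f j)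
      = (-1:ℝ)^k * (Nat.choose n k) *
          (1 / (((k:ℝ)+1) * ((k:ℝ)+2) * ((k:ℝ)+s) * (Nat.choose (k+r) (k+s) : ℝ))) := by
    intro k _
    rw [starLem r s hs hsr k]
  rw [Finset.sum_congr rfl hstep] at hinv
  calc ∑ k ∈ range (n + 1),
        (Nat.choose n k : ℝ) /
          (((k : ℝ) + 2) * ((k : ℝ) + s) * (Nat.choose (n + r) (k + s) : ℝ))
      = f n := rfl
    _ = ∑ k ∈ range (n+1), (-1:ℝ)^k * (Nat.choose n k) *
          (1 / (((k:ℝ)+1) * ((k:ℝ)+2) * ((k:ℝ)+s) * (Nat.choose (k+r) (k+s) : ℝ))) := hinv.symm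
    _ = ∑ k ∈ range (n + 1),
        (-1 : ℝ) ^ k * (Nat.choose n k : ℝ) /
          (((k : ℝ) + 1) * ((k : ℝ) + 2) * ((k : ℝ) + s) * (Nat.choose (k + r) (k + s) : ℝ)) := by
        apply Finset.sum_congr rfl
        intro k _
        rw [mul_one_div]
end
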